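/- Let G be an SPTG, ℓ_min a non-urgent location of minimal price (π(ℓ_min) ≤ π(ℓ) for every location ℓ of G), and r ∈ (0,1] such that G_{ℓ_min,r} is finitely optimal. If Val_{G_{ℓ_min,r}}(ℓ_min) is affine on a non-singleton interval I ⊆ [0,r] with slope strictly greater than −π(ℓ_min), then there exists f ∈ F_G such that Val_{G_{ℓ_min,r}}(ℓ_min, ν) = f(ν) for all ν ∈ I. -/

import Mathlib

/-!
Common formalization of one-clock priced timed games (PTGs), following
"Simple Priced Timed Games are not That Simple".
-/

namespace PTGPaper

/-- The three kinds of locations: locations of player Min, of player Max, and final locations. -/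
inductive Owner : Type
  | min : Owner
  | max : Owner
  | final : Owner
deriving DecidableEq

/-- A transition of a one-clock priced timed game: a source location, a guard
(an interval with endpoints `lo`, `hi`, with openness flags `loOpen`, `hiOpen`),
a reset flag, a discrete price, and a target location. -/
structure PTrans (L : Type) where
  src : L
  lo : ℝ
  hi : ℝ
  loOpen : Bool
  hiOpen : Bool
  reset : Bool
  price : ℤ
  tgt : L

noncomputable instance {L : Type} : DecidableEq (PTrans L) := Classical.decEq _

/-- Membership of a clock value in the guard of a transition. -/
def PTrans.memGuard {L : Type} (δ : PTrans L) (ν : ℝ) : Prop :=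
  (if δ.loOpen then δ.lo < ν else δ.lo ≤ ν) ∧
  (if δ.hiOpen then ν < δ.hi else ν ≤ δ.hi)

/-- A one-clock priced timed game. -/
structure PTG where
  Loc : Type
  locFin : Fintype Loc
  locDec : DecidableEq Loc
  owner : Loc → Owner
  urgent : Loc → Bool
  M : ℕ
  trans : Finset (PTrans Loc)
  price : Loc → ℤ
  fcost : Loc → ℝ → ℝ

attribute [instance] PTG.locFin PTG.locDec

/-- A configuration: a location together with a clock valuation. -/
abbrev PTG.Config (G : PTG) := G.Loc × ℝ

/-- `G.Move s s' t δ c` holds if from configuration `s`, waiting `t` time units and then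
taking transition `δ` is legal, leads to configuration `s'` and costs `c`. -/
def PTG.Move (G : PTG) (s s' : G.Config) (t : ℝ) (δ : PTrans G.Loc) (c : ℝ) : Prop :=
  δ ∈ G.trans ∧ δ.src = s.1 ∧ 0 ≤ t ∧ (G.urgent s.1 = true → t = 0) ∧
  δ.memGuard (s.2 + t) ∧ s'.1 = δ.tgt ∧
  s'.2 = (if δ.reset then 0 else s.2 + t) ∧
  c = (δ.price : ℝ) + t * (G.price s.1 : ℝ)

/-- A finite play (history): an initial configuration followed by a list of steps,
each step consisting of a delay, the transition taken, and the configuration reached. -/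
structure Hist (L : Type) where
  start : L × ℝ
  steps : List (ℝ × PTrans L × (L × ℝ))

namespace Hist

variable {L : Type}

def lastFrom (s : L × ℝ) : List (ℝ × PTrans L × (L × ℝ)) → L × ℝ
  | [] => s
  | (_, _, s') :: rest => lastFrom s' rest

/-- The last configuration of a finite play. -/
def last (h : Hist L) : L × ℝ := lastFrom h.start h.steps

def costFrom (π : L → ℤ) (s : L × ℝ) : List (ℝ × PTrans L × (L × ℝ)) → ℝ
  | [] => 0
  | (t, δ, s') :: rest => ((δ.price : ℝ) + t * (π s.1 : ℝ)) + costFrom π s' rest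

/-- The sum of the prices of the discrete transitions along a finite play. -/
def discSum (h : Hist L) : ℤ := (h.steps.map (fun st => st.2.1.price)).sum

/-- The prefix of a finite play consisting of its first `i` steps. -/
def take (h : Hist L) (i : ℕ) : Hist L := ⟨h.start, h.steps.take i⟩

end Hist

/-- Validity of a sequence of steps, starting from a given configuration. -/
def PTG.ValidFrom (G : PTG) : G.Config → List (ℝ × PTrans G.Loc × G.Config) → Prop
  | _, [] => True
  | s, (t, δ, s') :: rest => (∃ c, G.Move s s' t δ c) ∧ G.ValidFrom s' rest

/-- A valid finite play of `G`. -/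
def PTG.HistValid (G : PTG) (h : Hist G.Loc) : Prop :=
  0 ≤ h.start.2 ∧ h.start.2 ≤ (G.M : ℝ) ∧ G.ValidFrom h.start h.steps

/-- Accumulated cost of the moves of a finite play (without any final cost). -/
def PTG.accCost (G : PTG) (h : Hist G.Loc) : ℝ := Hist.costFrom G.price h.start h.steps

/-- A (deterministic) strategy, given as a function from finite plays to
a pair (delay, transition). -/
abbrev StratFun (L : Type) := Hist L → ℝ × PTrans L

/-- A finite play is consistent with strategy `σ` of the player owning locations of kind `P`
if at every step taken from a location of that player, the move is the one prescribed
by `σ` on the corresponding prefix. -/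
def PTG.Consistent (G : PTG) (P : Owner) (σ : StratFun G.Loc) (h : Hist G.Loc) : Prop :=
  ∀ (i : ℕ) (hi : i < h.steps.length),
    G.owner (h.take i).last.1 = P →
    ((h.steps.get ⟨i, hi⟩).1, (h.steps.get ⟨i, hi⟩).2.1) = σ (h.take i)

/-- A strategy of the player owning the locations of kind `P` is valid if it proposes
a legal move after every valid finite play ending in a location of that player. -/
def PTG.StratValid (G : PTG) (P : Owner) (σ : StratFun G.Loc) : Prop :=
  ∀ h : Hist G.Loc, G.HistValid h → G.owner h.last.1 = P →
    ∃ s' c, G.Move h.last s' (σ h).1 (σ h).2 c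

def PTG.MinValid (G : PTG) (σ : StratFun G.Loc) : Prop := G.StratValid Owner.min σ

def PTG.MaxValid (G : PTG) (τ : StratFun G.Loc) : Prop := G.StratValid Owner.max τ

/-- The configuration reached from `s` by the move `td = (delay, transition)`. -/
def PTG.nextCfg (G : PTG) (s : G.Config) (td : ℝ × PTrans G.Loc) : G.Config :=
  (td.2.tgt, if td.2.reset then 0 else s.2 + td.1)

/-- The finite play of length (at most) `n` obtained from initial configuration `s₀` when
Min plays `σ` and Max plays `τ` (the play stops growing when a final location is reached). -/
def PTG.histOf (G : PTG) (σ τ : StratFun G.Loc) (s₀ : G.Config) : ℕ → Hist G.Loc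
  | 0 => ⟨s₀, []⟩
  | n + 1 =>
    let h := G.histOf σ τ s₀ n
    if G.owner h.last.1 = Owner.final then h
    else
      let td := if G.owner h.last.1 = Owner.min then σ h else τ h
      ⟨h.start, h.steps ++ [(td.1, td.2, G.nextCfg h.last td)]⟩

open Classical in
/-- The cost of the play from `s₀` determined by the profile `(σ, τ)`: `+∞` if no final
location is ever reached, and otherwise the accumulated cost up to the first visit of a
final location, plus the final cost function of that location evaluated at the current
clock value. -/
noncomputable def PTG.playCost (G : PTG) (σ τ : StratFun G.Loc) (s₀ : G.Config) : EReal :=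
  if hx : ∃ n, G.owner ((G.histOf σ τ s₀ n).last.1) = Owner.final then
    (((G.accCost (G.histOf σ τ s₀ (Nat.find hx)) +
        G.fcost ((G.histOf σ τ s₀ (Nat.find hx)).last.1)
          ((G.histOf σ τ s₀ (Nat.find hx)).last.2)) : ℝ) : EReal)
  else ⊤

/-- `Val^σ(s)`, the value of a Min strategy `σ`. -/
noncomputable def PTG.minValue (G : PTG) (σ : StratFun G.Loc) (s : G.Config) : EReal :=
  ⨆ τ : {τ : StratFun G.Loc // G.MaxValid τ}, G.playCost σ τ.1 s

/-- `Val^τ(s)`, the value of a Max strategy `τ`. -/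
noncomputable def PTG.maxValue (G : PTG) (τ : StratFun G.Loc) (s : G.Config) : EReal :=
  ⨅ σ : {σ : StratFun G.Loc // G.MinValid σ}, G.playCost σ.1 τ s

/-- The upper value of the game. -/
noncomputable def PTG.uval (G : PTG) (s : G.Config) : EReal :=
  ⨅ σ : {σ : StratFun G.Loc // G.MinValid σ}, G.minValue σ.1 s

/-- The lower value of the game. -/
noncomputable def PTG.lval (G : PTG) (s : G.Config) : EReal :=
  ⨆ τ : {τ : StratFun G.Loc // G.MaxValid τ}, G.maxValue τ.1 s

/-- The value of the game (games are determined, so this coincides with the upper value). -/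
noncomputable def PTG.val (G : PTG) (s : G.Config) : EReal := G.lval s

/-- The fake value of a Min strategy `σ` at configuration `s`: the supremum of the costs of
the plays consistent with `σ` from `s` that do reach a final location. -/
noncomputable def PTG.fakeVal (G : PTG) (σ : StratFun G.Loc) (s : G.Config) : EReal :=
  sSup {x : EReal | ∃ h : Hist G.Loc, h.start = s ∧ G.HistValid h ∧
    G.Consistent Owner.min σ h ∧ G.owner h.last.1 = Owner.final ∧
    x = (((G.accCost h + G.fcost h.last.1 h.last.2) : ℝ) : EReal)}

/-- Well-formedness of a PTG: transitions leave non-final locations only, guards are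
contained in `[0, M]`, urgent locations are non-final, final cost functions are affine with
rational coefficients, and the game is deadlock-free. -/
def PTG.WF (G : PTG) : Prop :=
  (∀ δ ∈ G.trans, G.owner δ.src ≠ Owner.final) ∧
  (∀ δ ∈ G.trans, 0 ≤ δ.lo ∧ δ.hi ≤ (G.M : ℝ)) ∧
  (∀ ℓ, G.urgent ℓ = true → G.owner ℓ ≠ Owner.final) ∧
  (∀ ℓ, G.owner ℓ = Owner.final → ∃ a b : ℚ, ∀ ν : ℝ, G.fcost ℓ ν = (a : ℝ) * ν + (b : ℝ)) ∧
  (∀ (ℓ : G.Loc) (ν : ℝ), G.owner ℓ ≠ Owner.final → 0 ≤ ν → ν ≤ (G.M : ℝ) →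
    ∃ s' t δ c, G.Move (ℓ, ν) s' t δ c)

/-- All guards have natural-number endpoints. -/
def PTG.NatEndpoints (G : PTG) : Prop :=
  ∀ δ ∈ G.trans, (∃ n : ℕ, δ.lo = (n : ℝ)) ∧ ∃ n : ℕ, δ.hi = (n : ℝ)

/-- `P_T`: the largest absolute value of a transition price. -/
def PTG.PT (G : PTG) : ℕ := G.trans.sup fun δ => δ.price.natAbs

/-- `P_L`: the largest absolute value of a location price-rate. -/
def PTG.PL (G : PTG) : ℕ := Finset.univ.sup fun ℓ : G.Loc => (G.price ℓ).natAbs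

/-- `P_f`: the largest absolute value taken by a final cost function on `[0, r]`. -/
noncomputable def PTG.Pf (G : PTG) (r : ℝ) : ℝ :=
  sSup {x : ℝ | ∃ (ℓ : G.Loc) (ν : ℝ), G.owner ℓ = Owner.final ∧ 0 ≤ ν ∧ ν ≤ r ∧
    x = |G.fcost ℓ ν|}

/-- The number of locations `|L|`. -/
def PTG.nLoc (G : PTG) : ℕ := Fintype.card G.Loc

/-- The number of final locations `|L_f|`. -/
def PTG.nFin (G : PTG) : ℕ :=
  (Finset.univ.filter fun ℓ : G.Loc => G.owner ℓ = Owner.final).card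

/-- A measure of the size of `G` (locations, transitions, and binary encodings of
the numerical constants). -/
def PTG.size (G : PTG) : ℕ :=
  G.nLoc + G.trans.card + Nat.log2 (G.M + 2) + Nat.log2 (G.PT + 2) + Nat.log2 (G.PL + 2) + 2

/-- `G` is an `r`-SPTG: every transition has guard `[0, r]` and performs no reset. -/
def PTG.IsSPTG (G : PTG) (r : ℝ) : Prop :=
  0 ≤ r ∧ r ≤ 1 ∧ ∀ δ ∈ G.trans,
    δ.lo = 0 ∧ δ.hi = r ∧ δ.loOpen = false ∧ δ.hiOpen = false ∧ δ.reset = false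

/-- The left end of the `i`-th interval determined by the points `pt` (with the convention
`ν₀ = min 0 (pt 0)`). -/
def prevPt {k : ℕ} (pt : Fin (k + 1) → ℝ) (i : Fin (k + 1)) : ℝ :=
  if (i : ℕ) = 0 then min 0 (pt 0) else
    pt ⟨(i : ℕ) - 1, lt_of_le_of_lt (Nat.sub_le _ _) i.isLt⟩

/-- A finite positional (FP) strategy of the player owning locations of kind `P` in an
`r`-SPTG: a memoryless strategy which, on each location of that player, is described by
finitely many rational threshold points `0 ≤ ν₁ < ⋯ < ν_k = r` and transitions
`δ₁, …, δ_k`, and on each induced interval either always plays immediately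
or always waits until the right endpoint of the interval. -/
structure FPStrat (G : PTG) (r : ℝ) (P : Owner) where
  strat : StratFun G.Loc
  valid : G.StratValid P strat
  memoryless : ∀ h h' : Hist G.Loc, G.HistValid h → G.HistValid h' →
    h.last = h'.last → strat h = strat h'
  points : Finset ℝ
  points_rat : ∀ p ∈ points, ∃ q : ℚ, p = (q : ℝ)
  points_mem : ∀ p ∈ points, 0 ≤ p ∧ p ≤ r
  r_mem : r ∈ points
  piecewise : ∀ ℓ : G.Loc, G.owner ℓ = P →
    ∃ (k : ℕ) (pt : Fin (k + 1) → ℝ) (δ : Fin (k + 1) → PTrans G.Loc),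
      StrictMono pt ∧ 0 ≤ pt 0 ∧ pt (Fin.last k) = r ∧ (∀ i, pt i ∈ points) ∧
      (∀ i : Fin (k + 1),
        (∀ ν : ℝ, prevPt pt i < ν → ν ≤ pt i → strat ⟨(ℓ, ν), []⟩ = (0, δ i)) ∨
        (∀ ν : ℝ, prevPt pt i < ν → ν ≤ pt i → strat ⟨(ℓ, ν), []⟩ = (pt i - ν, δ i))) ∧
      (0 < pt 0 → strat ⟨(ℓ, 0), []⟩ = (pt 0, δ 0))

/-- The size `|σ|` of an FP strategy: the number of intervals generated by its points. -/
def FPStrat.size {G : PTG} {r : ℝ} {P : Owner} (σ : FPStrat G r P) : ℕ := σ.points.card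

/-- Two clock values lie in the same interval of the partition induced by `pts`
(intervals being half-open to the left). -/
def SameInterval (pts : Finset ℝ) (ν ν' : ℝ) : Prop := ∀ p ∈ pts, (ν ≤ p ↔ ν' ≤ p)

/-- A negative cycle (NC) strategy of Min: an FP strategy such that along every consistent
finite play which starts and ends in the same location, with both clock values in the same
interval of the strategy, the sum of the prices of the discrete transitions is at most −1. -/
def FPStrat.IsNC {G : PTG} {r : ℝ} (σ : FPStrat G r Owner.min) : Prop :=
  ∀ h : Hist G.Loc, G.HistValid h → G.Consistent Owner.min σ.strat h →
    h.steps ≠ [] → h.last.1 = h.start.1 → SameInterval σ.points h.start.2 h.last.2 →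
    h.discSum ≤ -1

/-- A fake-optimal Min strategy: its fake value equals the value of the game everywhere. -/
def FPStrat.FakeOpt {G : PTG} {r : ℝ} (σ : FPStrat G r Owner.min) : Prop :=
  ∀ (ℓ : G.Loc) (ν : ℝ), 0 ≤ ν → ν ≤ r → G.fakeVal σ.strat (ℓ, ν) = G.val (ℓ, ν)

/-- An optimal Max FP strategy: its value equals the value of the game everywhere. -/
def FPStrat.Opt {G : PTG} {r : ℝ} (τ : FPStrat G r Owner.max) : Prop :=
  ∀ (ℓ : G.Loc) (ν : ℝ), 0 ≤ ν → ν ≤ r → G.maxValue τ.strat (ℓ, ν) = G.val (ℓ, ν)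

/-- A cost function on `[0, r]`: either infinite, or continuous piecewise affine with
finitely many cutpoints, all cutpoints and the values at them being rational. -/
def IsCostFunctionOn (r : ℝ) (f : ℝ → EReal) : Prop :=
  (∀ ν : ℝ, 0 ≤ ν → ν ≤ r → f ν = ⊤) ∨
  (∀ ν : ℝ, 0 ≤ ν → ν ≤ r → f ν = ⊥) ∨
  ∃ (n : ℕ) (a : Fin (n + 1) → ℚ),
    Monotone a ∧ ((a 0 : ℝ) = 0) ∧ ((a (Fin.last n) : ℝ) = r) ∧
    (∀ i, ∃ q : ℚ, f ((a i : ℚ) : ℝ) = ((q : ℝ) : EReal)) ∧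
    ∀ i : Fin n, ∃ α β : ℝ, ∀ ν : ℝ, ((a i.castSucc : ℚ) : ℝ) ≤ ν → ν ≤ ((a i.succ : ℚ) : ℝ) →
      f ν = ((α * ν + β : ℝ) : EReal)

/-- An `r`-SPTG is finitely optimal if Min has a fake-optimal NC strategy, Max has an optimal
FP strategy, and the value function of every location is a cost function. -/
def PTG.FinitelyOptimal (G : PTG) (r : ℝ) : Prop :=
  (∃ σ : FPStrat G r Owner.min, σ.IsNC ∧ σ.FakeOpt) ∧
  (∃ τ : FPStrat G r Owner.max, τ.Opt) ∧
  ∀ ℓ : G.Loc, IsCostFunctionOn r fun ν => G.val (ℓ, ν)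

/-- The finite set `F_G` of affine functions `k + φ_ℓ`, for `ℓ` final and
`k ∈ [−(|L|−1)·P_T, |L|·P_T] ∩ ℤ`. -/
def PTG.FF (G : PTG) : Set (ℝ → ℝ) :=
  {f | ∃ (ℓ : G.Loc) (k : ℤ), G.owner ℓ = Owner.final ∧
    -(((G.nLoc : ℤ) - 1) * (G.PT : ℤ)) ≤ k ∧ k ≤ (G.nLoc : ℤ) * (G.PT : ℤ) ∧
    f = fun ν => (k : ℝ) + G.fcost ℓ ν}

noncomputable def PTG.FFcard (G : PTG) : ℕ := G.FF.ncard

/-- The set of possible cutpoints: intersection points of two distinct functions of `F_G`. -/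
def PTG.posscp (G : PTG) (r : ℝ) : Set ℝ :=
  {ν | 0 ≤ ν ∧ ν ≤ r ∧ ∃ f₁ ∈ G.FF, ∃ f₂ ∈ G.FF, f₁ ≠ f₂ ∧ f₁ ν = f₂ ν}

/-- The construction `Wait(G, r, x)`: all guards are restricted to `[0, r]` and, for every
non-urgent location `ℓ`, a clone final location `ℓ^f` is added, with final cost function
`ν ↦ (r − ν)·π(ℓ) + x_ℓ`, together with a price-0 transition `(ℓ, ℓ^f)`.
(Clone locations are created for all locations; those of urgent or final locations are
unreachable since no transition leads to them.) -/
noncomputable def PTG.wait (G : PTG) (r : ℝ) (x : G.Loc → ℝ) : PTG where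
  Loc := G.Loc ⊕ G.Loc
  locFin := inferInstance
  locDec := inferInstance
  owner := Sum.elim G.owner fun _ => Owner.final
  urgent := Sum.elim G.urgent fun _ => false
  M := G.M
  trans :=
    (G.trans.image fun δ =>
      { src := Sum.inl δ.src, lo := max δ.lo 0, hi := min δ.hi r,
        loOpen := δ.loOpen, hiOpen := δ.hiOpen, reset := δ.reset,
        price := δ.price, tgt := Sum.inl δ.tgt }) ∪
    ((Finset.univ.filter fun ℓ : G.Loc =>
        G.owner ℓ ≠ Owner.final ∧ G.urgent ℓ = false).image
      fun ℓ => { src := Sum.inl ℓ, lo := 0, hi := r, loOpen := false, hiOpen := false,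
                 reset := false, price := 0, tgt := Sum.inr ℓ })
  price := Sum.elim G.price fun _ => 0
  fcost := Sum.elim G.fcost fun ℓ ν => (r - ν) * (G.price ℓ : ℝ) + x ℓ

/-- `G_r = Wait(G, r, (Val_G(ℓ, r))_ℓ)`. -/
noncomputable def PTG.Gr (G : PTG) (r : ℝ) : PTG :=
  G.wait r fun ℓ => (G.val (ℓ, r)).toReal

/-- Making the locations indicated by `S` urgent. -/
def PTG.makeUrgent (G : PTG) (S : G.Loc → Bool) : PTG :=
  { G with urgent := fun ℓ => G.urgent ℓ || S ℓ }

/-- `G_{L', r}`: the game `G_r` in which all locations of `L'` are made urgent. -/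
noncomputable def PTG.GLr (G : PTG) (S : G.Loc → Bool) (r : ℝ) : PTG :=
  (G.Gr r).makeUrgent (Sum.elim S fun _ => false)

/-- The operator `Next_{L'}(r)`: the supremum of the `r' ≤ r` such that the value functions
of `G_{L',r}` and of `G` coincide on `[r', r]`. -/
noncomputable def PTG.Next (G : PTG) (S : G.Loc → Bool) (r : ℝ) : ℝ :=
  sSup {r' : ℝ | 0 ≤ r' ∧ r' ≤ r ∧ ∀ (ℓ : G.Loc) (ν : ℝ), r' ≤ ν → ν ≤ r →
    (G.GLr S r).val (Sum.inl ℓ, ν) = G.val (ℓ, ν)}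

/-- Turning additionally location `ℓ` urgent: `L' ∪ {ℓ}` as a Boolean predicate. -/
def addLoc (G : PTG) (S : G.Loc → Bool) (ℓ : G.Loc) : G.Loc → Bool :=
  fun ℓ' => S ℓ' || decide (ℓ' = ℓ)

/-- The singleton `{ℓ}` as a Boolean predicate. -/
def singLoc (G : PTG) (ℓ : G.Loc) : G.Loc → Bool := fun ℓ' => decide (ℓ' = ℓ)

/-- `f` is, on `[0, r]`, piecewise affine with at most `N` cutpoints. -/
def PWAffineOn (r : ℝ) (f : ℝ → EReal) (N : ℕ) : Prop :=
  ∃ n : ℕ, n ≤ N ∧ ∃ a : Fin (n + 2) → ℝ,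
    Monotone a ∧ a 0 = 0 ∧ a (Fin.last (n + 1)) = r ∧
    ∀ i : Fin (n + 1), ∃ α β : ℝ, ∀ ν : ℝ, a i.castSucc ≤ ν → ν ≤ a i.succ →
      f ν = ((α * ν + β : ℝ) : EReal)

/-- `f` has a cutpoint in `[a, b)`: some point of `[a, b)` has no neighbourhood
(within `[0,1]`) on which `f` is affine. -/
def HasCutpointIn (f : ℝ → EReal) (a b : ℝ) : Prop :=
  ∃ x : ℝ, a ≤ x ∧ x < b ∧ ∀ ε : ℝ, 0 < ε →
    ¬ ∃ α β : ℝ, ∀ ν : ℝ, max 0 (x - ε) ≤ ν → ν ≤ min 1 (x + ε) →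
      f ν = ((α * ν + β : ℝ) : EReal)

/-- The endpoints of the guards of `G`, together with `0`. -/
noncomputable def PTG.endpoints (G : PTG) : Finset ℝ :=
  insert 0 ((G.trans.image PTrans.lo) ∪ (G.trans.image PTrans.hi))

/-- `s` is a region of `G`: a singleton of an endpoint, or an open interval between two
consecutive endpoints. -/
def PTG.IsRegion (G : PTG) (s : Set ℝ) : Prop :=
  (∃ e ∈ G.endpoints, s = {e}) ∨
  ∃ e ∈ G.endpoints, ∃ e' ∈ G.endpoints, e < e' ∧
    (∀ p ∈ G.endpoints, p ≤ e ∨ e' ≤ p) ∧ s = Set.Ioo e e'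

/-- No cycle of the configuration graph of `G` traverses a resetting transition. -/
def PTG.ResetAcyclic (G : PTG) : Prop :=
  ¬ ∃ h : Hist G.Loc, G.HistValid h ∧ h.steps ≠ [] ∧ h.last = h.start ∧
      ∃ st ∈ h.steps, st.2.1.reset = true

/-- An `ε`-optimal strategy of Min. -/
def PTG.MinEpsOpt (G : PTG) (σ : StratFun G.Loc) (ε : ℝ) : Prop :=
  G.MinValid σ ∧ ∀ (ℓ : G.Loc) (ν : ℝ), 0 ≤ ν → ν ≤ (G.M : ℝ) →
    G.minValue σ (ℓ, ν) ≤ G.val (ℓ, ν) + (ε : EReal)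

/-- An `ε`-optimal strategy of Max. -/
def PTG.MaxEpsOpt (G : PTG) (τ : StratFun G.Loc) (ε : ℝ) : Prop :=
  G.MaxValid τ ∧ ∀ (ℓ : G.Loc) (ν : ℝ), 0 ≤ ν → ν ≤ (G.M : ℝ) →
    G.val (ℓ, ν) - (ε : EReal) ≤ G.maxValue τ (ℓ, ν)

end PTGPaper
namespace PTGPaper


section Lemma10Aux

/-- Abbreviation for lists of steps. -/
abbrev Steps (P : PTG) := List (ℝ × PTrans P.Loc × P.Config)

/-- All transitions have guard `[0,r]` (closed), no reset, and leave non-final locations. -/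
def TransUniform (P : PTG) (r : ℝ) : Prop :=
  ∀ δ ∈ P.trans, δ.lo = 0 ∧ δ.hi = r ∧ δ.loOpen = false ∧ δ.hiOpen = false ∧
    δ.reset = false ∧ P.owner δ.src ≠ Owner.final

lemma memGuard_iff {P : PTG} {r : ℝ} (hu : TransUniform P r) {δ} (hδ : δ ∈ P.trans) (ν : ℝ) :
    δ.memGuard ν ↔ 0 ≤ ν ∧ ν ≤ r := by
  obtain ⟨h1, h2, h3, h4, -, -⟩ := hu δ hδ
  simp [PTrans.memGuard, h1, h2, h3, h4]

lemma lastFrom_append {L : Type} (s : L × ℝ) (A B : List (ℝ × PTrans L × (L × ℝ))) :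
    Hist.lastFrom s (A ++ B) = Hist.lastFrom (Hist.lastFrom s A) B := by
  induction A generalizing s with
  | nil => rfl
  | cons x t ih => obtain ⟨a, b, c⟩ := x; simp [Hist.lastFrom, ih]

lemma costFrom_append {L : Type} (π : L → ℤ) (s : L × ℝ) (A B : List (ℝ × PTrans L × (L × ℝ))) :
    Hist.costFrom π s (A ++ B) =
      Hist.costFrom π s A + Hist.costFrom π (Hist.lastFrom s A) B := by
  induction A generalizing s with
  | nil => simp [Hist.costFrom, Hist.lastFrom]
  | cons x t ih => obtain ⟨a, b, c⟩ := x; simp [Hist.costFrom, Hist.lastFrom, ih]; ring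

lemma validFrom_append {P : PTG} (s : P.Config) (A B : Steps P) :
    P.ValidFrom s (A ++ B) ↔ (P.ValidFrom s A ∧ P.ValidFrom (Hist.lastFrom s A) B) := by
  induction A generalizing s with
  | nil => simp [PTG.ValidFrom, Hist.lastFrom]
  | cons x t ih =>
      obtain ⟨a, b, c⟩ := x
      simp [PTG.ValidFrom, Hist.lastFrom, ih, and_assoc]

/-- "Simple consistency": every step from a Min location is the one prescribed by `σf`
on the one-step history from the current configuration. -/
def SCFrom (P : PTG) (σf : StratFun P.Loc) : P.Config → Steps P → Prop
  | _, [] => True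
  | s, (t, δ, s') :: rest =>
      (P.owner s.1 = Owner.min → (t, δ) = σf ⟨s, []⟩) ∧ SCFrom P σf s' rest

lemma scFrom_append {P : PTG} (σf : StratFun P.Loc) (s : P.Config) (A B : Steps P) :
    SCFrom P σf s (A ++ B) ↔ (SCFrom P σf s A ∧ SCFrom P σf (Hist.lastFrom s A) B) := by
  induction A generalizing s with
  | nil => simp [SCFrom, Hist.lastFrom]
  | cons x t ih =>
      obtain ⟨a, b, c⟩ := x
      simp [SCFrom, Hist.lastFrom, ih, and_assoc]

/-- A chain of transitions: each transition is in `P.trans` and departs from the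
current location. -/
def ChainOK (P : PTG) : P.Loc → List (PTrans P.Loc) → Prop
  | _, [] => True
  | ℓ, δ :: rest => δ ∈ P.trans ∧ δ.src = ℓ ∧ ChainOK P δ.tgt rest

def SCChain (P : PTG) (σf : StratFun P.Loc) (ν : ℝ) : P.Loc → List (PTrans P.Loc) → Prop
  | _, [] => True
  | ℓ, δ :: rest =>
      (P.owner ℓ = Owner.min → (0, δ) = σf ⟨(ℓ, ν), []⟩) ∧ SCChain P σf ν δ.tgt rest

def chainEnd (P : PTG) : P.Loc → List (PTrans P.Loc) → P.Loc
  | ℓ, [] => ℓ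
  | _, δ :: rest => chainEnd P δ.tgt rest

def sumP {L : Type} (l : List (PTrans L)) : ℤ := (l.map fun δ => δ.price).sum

def mkSteps (P : PTG) (ν : ℝ) (l : List (PTrans P.Loc)) : Steps P :=
  l.map fun δ => (0, δ, (δ.tgt, ν))

def visited (P : PTG) (ℓ : P.Loc) (δs : List (PTrans P.Loc)) : List P.Loc :=
  ℓ :: δs.map fun δ => δ.tgt

lemma chainEnd_append (P : PTG) (ℓ : P.Loc) (A B : List (PTrans P.Loc)) :
    chainEnd P ℓ (A ++ B) = chainEnd P (chainEnd P ℓ A) B := by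
  induction A generalizing ℓ with
  | nil => rfl
  | cons δ t ih => simp [chainEnd, ih]

lemma chainOK_append (P : PTG) (ℓ : P.Loc) (A B : List (PTrans P.Loc)) :
    ChainOK P ℓ (A ++ B) ↔ ChainOK P ℓ A ∧ ChainOK P (chainEnd P ℓ A) B := by
  induction A generalizing ℓ with
  | nil => simp [ChainOK, chainEnd]
  | cons δ t ih => simp [ChainOK, chainEnd, ih, and_assoc]

lemma scChain_append (P : PTG) (σf : StratFun P.Loc) (ν : ℝ) (ℓ : P.Loc)
    (A B : List (PTrans P.Loc)) :
    SCChain P σf ν ℓ (A ++ B) ↔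
      SCChain P σf ν ℓ A ∧ SCChain P σf ν (chainEnd P ℓ A) B := by
  induction A generalizing ℓ with
  | nil => simp [SCChain, chainEnd]
  | cons δ t ih => simp [SCChain, chainEnd, ih, and_assoc]

lemma sumP_append {L : Type} (A B : List (PTrans L)) : sumP (A ++ B) = sumP A + sumP B := by
  simp [sumP]

lemma mkSteps_append (P : PTG) (ν : ℝ) (A B : List (PTrans P.Loc)) :
    mkSteps P ν (A ++ B) = mkSteps P ν A ++ mkSteps P ν B := by
  simp [mkSteps]

lemma lastFrom_mkSteps (P : PTG) (ν : ℝ) (ℓ : P.Loc) (δs : List (PTrans P.Loc)) :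
    Hist.lastFrom (ℓ, ν) (mkSteps P ν δs) = (chainEnd P ℓ δs, ν) := by
  induction δs generalizing ℓ with
  | nil => rfl
  | cons δ t ih => exact ih δ.tgt

lemma costFrom_mkSteps (P : PTG) (ν : ℝ) (ℓ : P.Loc) (δs : List (PTrans P.Loc)) :
    Hist.costFrom P.price (ℓ, ν) (mkSteps P ν δs) = (sumP δs : ℝ) := by
  induction δs generalizing ℓ with
  | nil => simp [mkSteps, Hist.costFrom, sumP]
  | cons δ t ih =>
      have h := ih δ.tgt
      simp only [mkSteps, List.map_cons, Hist.costFrom, sumP, List.sum_cons] at h ⊢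
      rw [h]; push_cast; ring

lemma discSum_mkSteps (P : PTG) (s : P.Config) (ν : ℝ) (δs : List (PTrans P.Loc)) :
    Hist.discSum ⟨s, mkSteps P ν δs⟩ = sumP δs := by
  simp only [Hist.discSum, mkSteps, sumP, List.map_map]
  rfl

lemma validFrom_mkSteps {P : PTG} {r : ℝ} (hu : TransUniform P r) {ν : ℝ}
    (h0 : 0 ≤ ν) (hr : ν ≤ r) :
    ∀ (δs : List (PTrans P.Loc)) (ℓ : P.Loc), ChainOK P ℓ δs →
      P.ValidFrom (ℓ, ν) (mkSteps P ν δs) := by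
  intro δs
  induction δs with
  | nil => intro ℓ _; trivial
  | cons δ t ih =>
      rintro ℓ ⟨hmem, hsrc, hc⟩
      obtain ⟨-, -, -, -, hreset, -⟩ := hu δ hmem
      refine ⟨⟨(δ.price : ℝ) + 0 * (P.price ℓ : ℝ), hmem, hsrc, le_refl 0, fun _ => rfl, ?_, rfl,
        ?_, rfl⟩, ih δ.tgt hc⟩
      · rw [add_zero, memGuard_iff hu hmem]; exact ⟨h0, hr⟩
      · simp [hreset]

lemma chainOK_of_validFrom {P : PTG} {ν : ℝ} :
    ∀ (δs : List (PTrans P.Loc)) (ℓ : P.Loc),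
      P.ValidFrom (ℓ, ν) (mkSteps P ν δs) → ChainOK P ℓ δs := by
  intro δs
  induction δs with
  | nil => intro ℓ _; trivial
  | cons δ t ih =>
      rintro ℓ ⟨⟨c, hmv⟩, hv⟩
      exact ⟨hmv.1, hmv.2.1, ih δ.tgt hv⟩

lemma scChain_iff_scFrom {P : PTG} (σf : StratFun P.Loc) (ν : ℝ) :
    ∀ (δs : List (PTrans P.Loc)) (ℓ : P.Loc),
      SCFrom P σf (ℓ, ν) (mkSteps P ν δs) ↔ SCChain P σf ν ℓ δs := by
  intro δs
  induction δs with
  | nil => intro ℓ; simp [mkSteps, SCFrom, SCChain]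
  | cons δ t ih =>
      intro ℓ
      simp only [mkSteps, List.map_cons, SCFrom, SCChain]
      exact and_congr Iff.rfl (ih δ.tgt)


lemma validFrom_take {P : PTG} :
    ∀ (steps : Steps P) (i : ℕ) (s : P.Config),
      P.ValidFrom s steps → P.ValidFrom s (steps.take i) := by
  intro steps
  induction steps with
  | nil => intro i s h; simpa using h
  | cons x rest ih =>
      intro i s h
      cases i with
      | zero => trivial
      | succ n => exact ⟨h.1, ih n x.2.2 h.2⟩

lemma take_hist_valid {P : PTG} {s : P.Config} {steps : Steps P}
    (hv : P.HistValid ⟨s, steps⟩) (i : ℕ) : P.HistValid ⟨s, steps.take i⟩ :=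
  ⟨hv.1, hv.2.1, validFrom_take steps i s hv.2.2⟩

lemma tail_valid {P : PTG} {r : ℝ} (hu : TransUniform P r) (hrM : r ≤ (P.M : ℝ))
    {s : P.Config} {x : ℝ × PTrans P.Loc × P.Config} {rest : Steps P}
    (hv : P.HistValid ⟨s, x :: rest⟩) : P.HistValid ⟨x.2.2, rest⟩ := by
  obtain ⟨t, δ, s'⟩ := x
  obtain ⟨h0, hM, ⟨c, hmv⟩, hrest⟩ := hv
  obtain ⟨hmem, -, -, -, hguard, -, hs2, -⟩ := hmv
  obtain ⟨-, -, -, -, hreset, -⟩ := hu δ hmem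
  rw [memGuard_iff hu hmem] at hguard
  have hM0 : (0 : ℝ) ≤ (P.M : ℝ) := Nat.cast_nonneg _
  refine ⟨?_, ?_, hrest⟩
  · rw [hs2]; rw [hreset]; simpa using hguard.1
  · rw [hs2]; rw [hreset]; simpa using le_trans hguard.2 hrM

lemma consistent_cons {P : PTG} {σf : StratFun P.Loc} {r : ℝ}
    (hu : TransUniform P r) (hrM : r ≤ (P.M : ℝ))
    (hmem : ∀ h h' : Hist P.Loc, P.HistValid h → P.HistValid h' → h.last = h'.last →
      σf h = σf h')
    {s : P.Config} {x : ℝ × PTrans P.Loc × P.Config} {rest : Steps P}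
    (hv : P.HistValid ⟨s, x :: rest⟩) :
    P.Consistent Owner.min σf ⟨s, x :: rest⟩ ↔
      ((P.owner s.1 = Owner.min → (x.1, x.2.1) = σf ⟨s, []⟩) ∧
        P.Consistent Owner.min σf ⟨x.2.2, rest⟩) := by
  obtain ⟨t, δ, s'⟩ := x
  have hv' : P.HistValid ⟨s', rest⟩ := tail_valid hu hrM hv
  have hkey : ∀ i : ℕ,
      σf (Hist.take ⟨s, (t, δ, s') :: rest⟩ (i + 1)) = σf (Hist.take ⟨s', rest⟩ i) := by
    intro i
    apply hmem
    · exact take_hist_valid hv _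
    · exact take_hist_valid hv' _
    · rfl
  constructor
  · intro hc
    refine ⟨fun how => hc 0 (Nat.succ_pos _) how, ?_⟩
    intro i hi how
    have hbig := hc (i + 1) (Nat.succ_lt_succ hi) how
    exact hbig.trans (hkey i)
  · rintro ⟨hhead, htail⟩ i hi how
    cases i with
    | zero => exact hhead how
    | succ n => exact (htail n (Nat.lt_of_succ_lt_succ hi) how).trans (hkey n).symm

lemma consistent_iff_scFrom {P : PTG} {σf : StratFun P.Loc} {r : ℝ}
    (hu : TransUniform P r) (hrM : r ≤ (P.M : ℝ))
    (hmem : ∀ h h' : Hist P.Loc, P.HistValid h → P.HistValid h' → h.last = h'.last →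
      σf h = σf h') :
    ∀ (steps : Steps P) (s : P.Config), P.HistValid ⟨s, steps⟩ →
      (P.Consistent Owner.min σf ⟨s, steps⟩ ↔ SCFrom P σf s steps) := by
  intro steps
  induction steps with
  | nil =>
      intro s hv
      constructor
      · intro _; trivial
      · intro _ i hi
        exact absurd hi (by simp)
  | cons x rest ih =>
      intro s hv
      rw [consistent_cons hu hrM hmem hv, ih x.2.2 (tail_valid hu hrM hv)]
      obtain ⟨t, δ, s'⟩ := x
      exact Iff.rfl

lemma srcs_sub_visited {P : PTG} :
    ∀ (δs : List (PTrans P.Loc)) (ℓ : P.Loc), ChainOK P ℓ δs →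
      (δs.map fun δ => δ.src) ⊆ visited P ℓ δs := by
  intro δs
  induction δs with
  | nil => intro ℓ _; simp
  | cons δ t ih =>
      rintro ℓ ⟨hmem, hsrc, hc⟩ x hx
      rcases List.mem_cons.1 hx with h | h
      · show x ∈ _
        rw [h]; show δ.src ∈ _; rw [hsrc]; exact List.mem_cons_self
      · have : x ∈ visited P δ.tgt t := ih δ.tgt hc h
        exact List.mem_cons_of_mem _ this

lemma srcs_nodup {P : PTG} :
    ∀ (δs : List (PTrans P.Loc)) (ℓ : P.Loc), ChainOK P ℓ δs →
      (visited P ℓ δs).Nodup → (δs.map fun δ => δ.src).Nodup := by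
  intro δs
  induction δs with
  | nil => intro ℓ _ _; simp
  | cons δ t ih =>
      rintro ℓ ⟨hmem, hsrc, hc⟩ hnd
      have hnd' : (visited P δ.tgt t).Nodup := (List.nodup_cons.1 hnd).2
      have hnotin : ℓ ∉ visited P δ.tgt t := (List.nodup_cons.1 hnd).1
      refine List.nodup_cons.2 ⟨?_, ih δ.tgt hc hnd'⟩
      show δ.src ∉ _
      rw [hsrc]
      exact fun hcon => hnotin (srcs_sub_visited t δ.tgt hc hcon)

lemma srcs_nonfinal {P : PTG} {r : ℝ} (hu : TransUniform P r) :
    ∀ (δs : List (PTrans P.Loc)) (ℓ : P.Loc), ChainOK P ℓ δs →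
      ∀ x ∈ (δs.map fun δ => δ.src), P.owner x ≠ Owner.final := by
  intro δs
  induction δs with
  | nil => intro ℓ _ x hx; simp at hx
  | cons δ t ih =>
      rintro ℓ ⟨hmem, hsrc, hc⟩ x hx
      rcases List.mem_cons.1 hx with h | h
      · rw [h]; show P.owner δ.src ≠ Owner.final; exact (hu δ hmem).2.2.2.2.2
      · exact ih δ.tgt hc x h

lemma chain_length_le {P : PTG} {r : ℝ} (hu : TransUniform P r)
    {ℓ : P.Loc} {δs : List (PTrans P.Loc)} (hc : ChainOK P ℓ δs)
    (hnd : (visited P ℓ δs).Nodup) :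
    δs.length ≤ (Finset.univ.filter fun x : P.Loc => P.owner x ≠ Owner.final).card := by
  classical
  have h1 : (δs.map fun δ => δ.src).Nodup := srcs_nodup δs ℓ hc hnd
  have h2 := srcs_nonfinal hu δs ℓ hc
  calc δs.length = (δs.map fun δ => δ.src).length := (List.length_map _).symm
    _ = (δs.map fun δ => δ.src).toFinset.card := (List.toFinset_card_of_nodup h1).symm
    _ ≤ _ := by
        apply Finset.card_le_card
        intro x hx
        rw [List.mem_toFinset] at hx
        exact Finset.mem_filter.2 ⟨Finset.mem_univ _, h2 x hx⟩

lemma abs_sumP_le {L : Type} (Q : ℤ) :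
    ∀ δs : List (PTrans L), (∀ δ ∈ δs, |δ.price| ≤ Q) → |sumP δs| ≤ (δs.length : ℤ) * Q := by
  intro δs
  induction δs with
  | nil => intro _; simp [sumP]
  | cons δ t ih =>
      intro hb
      have h1 : |δ.price| ≤ Q := hb δ List.mem_cons_self
      have h2 := ih fun δ' h => hb δ' (List.mem_cons_of_mem _ h)
      have : sumP (δ :: t) = δ.price + sumP t := by simp [sumP]
      rw [this]
      calc |δ.price + sumP t| ≤ |δ.price| + |sumP t| := abs_add_le _ _
        _ ≤ Q + (t.length : ℤ) * Q := add_le_add h1 h2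
        _ = ((δ :: t).length : ℤ) * Q := by simp [List.length_cons]; ring


lemma sumP_cons {L : Type} (δ : PTrans L) (t : List (PTrans L)) :
    sumP (δ :: t) = δ.price + sumP t := by simp [sumP]

lemma reduce_chain {P : PTG} {σf : StratFun P.Loc} {ν : ℝ}
    (HNC : ∀ (ℓ : P.Loc) (δs : List (PTrans P.Loc)), ChainOK P ℓ δs →
      SCChain P σf ν ℓ δs → δs ≠ [] → chainEnd P ℓ δs = ℓ → sumP δs ≤ -1) :
    ∀ (n : ℕ) (δs : List (PTrans P.Loc)), δs.length ≤ n → ∀ ℓ : P.Loc,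
      ChainOK P ℓ δs → SCChain P σf ν ℓ δs →
      ∃ δs', ChainOK P ℓ δs' ∧ SCChain P σf ν ℓ δs' ∧
        chainEnd P ℓ δs' = chainEnd P ℓ δs ∧ sumP δs ≤ sumP δs' ∧
        (visited P ℓ δs').Nodup ∧ visited P ℓ δs' ⊆ visited P ℓ δs := by
  intro n
  induction n with
  | zero =>
      intro δs hlen ℓ hc hsc
      have hnil : δs = [] := List.eq_nil_of_length_eq_zero (Nat.le_zero.1 hlen)
      subst hnil
      exact ⟨[], trivial, trivial, rfl, le_refl _, List.nodup_singleton _, fun x h => h⟩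
  | succ n ih =>
      intro δs hlen ℓ hc hsc
      cases δs with
      | nil =>
          exact ⟨[], trivial, trivial, rfl, le_refl _, List.nodup_singleton _, fun x h => h⟩
      | cons δ tail =>
        by_cases hmemℓ : ℓ ∈ (δ :: tail).map fun d => d.tgt
        · obtain ⟨δ₂, hδ₂mem, htgt⟩ := List.mem_map.1 hmemℓ
          obtain ⟨A, C, hsplit⟩ := List.append_of_mem hδ₂mem
          rw [hsplit] at hc hsc hlen ⊢
          rw [List.append_cons] at hc hsc
          rw [chainOK_append] at hc
          rw [scChain_append] at hsc
          have hcycend : chainEnd P ℓ (A ++ [δ₂]) = ℓ := by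
            rw [chainEnd_append]
            exact htgt
          have hCok : ChainOK P ℓ C := by have h := hc.2; rwa [hcycend] at h
          have hCsc : SCChain P σf ν ℓ C := by have h := hsc.2; rwa [hcycend] at h
          have hcyc : sumP (A ++ [δ₂]) ≤ -1 :=
            HNC ℓ _ hc.1 hsc.1 (by simp) hcycend
          have hClen : C.length ≤ n := by
            rw [List.length_append] at hlen; simp at hlen; omega
          obtain ⟨C', h1, h2, h3, h4, h5, h6⟩ := ih C hClen ℓ hCok hCsc
          refine ⟨C', h1, h2, ?_, ?_, h5, ?_⟩
          · rw [h3, List.append_cons, chainEnd_append, hcycend]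
          · rw [List.append_cons, sumP_append]
            linarith
          · intro x hx
            have hx' := h6 hx
            rcases List.mem_cons.1 hx' with h | h
            · rw [h]; exact List.mem_cons_self
            · obtain ⟨d, hd, hdx⟩ := List.mem_map.1 h
              refine List.mem_cons_of_mem _ (List.mem_map.2 ⟨d, ?_, hdx⟩)
              exact List.mem_append_right _ (List.mem_cons_of_mem _ hd)
        · obtain ⟨hm, hs, hct⟩ := hc
          obtain ⟨hsch, hsct⟩ := hsc
          have htlen : tail.length ≤ n := by simp at hlen; omega
          obtain ⟨t', h1, h2, h3, h4, h5, h6⟩ := ih tail htlen δ.tgt hct hsct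
          refine ⟨δ :: t', ⟨hm, hs, h1⟩, ⟨hsch, h2⟩, h3, ?_, ?_, ?_⟩
          · rw [sumP_cons, sumP_cons]; linarith
          · show (ℓ :: visited P δ.tgt t').Nodup
            refine List.nodup_cons.2 ⟨?_, h5⟩
            intro hcon
            exact hmemℓ (h6 hcon)
          · show ℓ :: visited P δ.tgt t' ⊆ ℓ :: visited P δ.tgt tail
            exact List.cons_subset_cons ℓ h6

lemma split_steps {P : PTG} {r : ℝ} (hu : TransUniform P r) :
    ∀ (steps : Steps P) (s : P.Config), P.ValidFrom s steps →
      (∃ δs, steps = mkSteps P s.2 δs) ∨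
      (∃ (δs : List (PTrans P.Loc)) (t₀ : ℝ) (δ₀ : PTrans P.Loc) (s₀ : P.Config)
          (suf : Steps P),
        steps = mkSteps P s.2 δs ++ (t₀, δ₀, s₀) :: suf ∧ t₀ ≠ 0) := by
  intro steps
  induction steps with
  | nil => intro s _; exact Or.inl ⟨[], rfl⟩
  | cons x rest ih =>
      intro s hv
      obtain ⟨t, δ, s'⟩ := x
      obtain ⟨⟨c, hmv⟩, hrest⟩ := hv
      by_cases ht : t = 0
      · subst ht
        obtain ⟨hmem, hsrc, -, -, -, hs1, hs2, -⟩ := hmv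
        have hreset := (hu δ hmem).2.2.2.2.1
        have hs' : s' = (δ.tgt, s.2) := by
          refine Prod.ext hs1 ?_
          rw [hs2, hreset]; simp
        subst hs'
        rcases ih (δ.tgt, s.2) hrest with ⟨δs, hδs⟩ | ⟨δs, t₀, δ₀, s₀, suf, hsp, ht₀⟩
        · left
          refine ⟨δ :: δs, ?_⟩
          simp only [mkSteps, List.map_cons]
          rw [show rest = mkSteps P s.2 δs from hδs]
          rfl
        · right
          refine ⟨δ :: δs, t₀, δ₀, s₀, suf, ?_, ht₀⟩
          simp only [mkSteps, List.map_cons]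
          rw [show rest = mkSteps P s.2 δs ++ (t₀, δ₀, s₀) :: suf from hsp]
          rfl
      · exact Or.inr ⟨[], t, δ, s', rest, rfl, ht⟩

lemma strat_on_interval {P : PTG} {r : ℝ} (σ' : FPStrat P r Owner.min) {u v : ℝ}
    (hu0 : 0 < u) (huv : u ≤ v) (hvr : v ≤ r)
    (hdisj : ∀ p ∈ σ'.points, ¬ (u ≤ p ∧ p ≤ v)) (ℓ : P.Loc)
    (hℓ : P.owner ℓ = Owner.min) :
    (∃ δ, ∀ ν, u ≤ ν → ν ≤ v → σ'.strat ⟨(ℓ, ν), []⟩ = (0, δ)) ∨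
    (∃ p δ, v < p ∧ ∀ ν, u ≤ ν → ν ≤ v → σ'.strat ⟨(ℓ, ν), []⟩ = (p - ν, δ)) := by
  classical
  obtain ⟨k, pt, δf, hmono, h0le, hlast, hmem, hpw, hspec⟩ := σ'.piecewise ℓ hℓ
  have hne : (Finset.univ.filter fun i : Fin (k + 1) => v ≤ pt i).Nonempty := by
    refine ⟨Fin.last k, Finset.mem_filter.2 ⟨Finset.mem_univ _, ?_⟩⟩
    rw [hlast]; exact hvr
  set i := (Finset.univ.filter fun i : Fin (k + 1) => v ≤ pt i).min' hne with hidef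
  have hiv : v ≤ pt i := by
    have h := Finset.min'_mem _ hne
    exact (Finset.mem_filter.1 h).2
  have hiv' : v < pt i := by
    rcases lt_or_eq_of_le hiv with h | h
    · exact h
    · exact absurd ⟨le_trans huv hiv, h ▸ le_refl v⟩ (hdisj (pt i) (hmem i))
  have hprev : prevPt pt i < u := by
    by_cases h0 : (i : ℕ) = 0
    · rw [prevPt, if_pos h0]; exact lt_of_le_of_lt (min_le_left _ _) hu0
    · rw [prevPt, if_neg h0]
      set j : Fin (k + 1) := ⟨(i : ℕ) - 1, lt_of_le_of_lt (Nat.sub_le _ _) i.isLt⟩ with hjdef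
      have hjv : pt j < v := by
        by_contra hcon
        push_neg at hcon
        have hji : i ≤ j :=
          Finset.min'_le _ j (Finset.mem_filter.2 ⟨Finset.mem_univ _, hcon⟩)
        have hji' : (i : ℕ) ≤ (j : ℕ) := hji
        have : (j : ℕ) = (i : ℕ) - 1 := rfl
        omega
      by_contra hcon2
      push_neg at hcon2
      exact hdisj (pt j) (hmem j) ⟨hcon2, le_of_lt hjv⟩
  rcases hpw i with hcase | hcase
  · exact Or.inl ⟨δf i, fun ν h1 h2 =>
      hcase ν (lt_of_lt_of_le hprev h1) (le_trans h2 (le_of_lt hiv'))⟩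
  · exact Or.inr ⟨pt i, δf i, hiv', fun ν h1 h2 =>
      hcase ν (lt_of_lt_of_le hprev h1) (le_trans h2 (le_of_lt hiv'))⟩


lemma chain_mem_trans {P : PTG} :
    ∀ (δs : List (PTrans P.Loc)) (ℓ : P.Loc), ChainOK P ℓ δs → ∀ δ ∈ δs, δ ∈ P.trans := by
  intro δs
  induction δs with
  | nil => intro ℓ _ δ hδ; simp at hδ
  | cons d t ih =>
      rintro ℓ ⟨hm, hs, hc⟩ δ hδ
      rcases List.mem_cons.1 hδ with h | h
      · rw [h]; exact hm
      · exact ih d.tgt hc δ h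

section GLrFacts

variable (G : PTG) (S : G.Loc → Bool) (r : ℝ)

lemma GLr_owner_inl (ℓ : G.Loc) : (G.GLr S r).owner (Sum.inl ℓ) = G.owner ℓ := rfl

lemma GLr_owner_inr (ℓ : G.Loc) : (G.GLr S r).owner (Sum.inr ℓ) = Owner.final := rfl

lemma GLr_price_inl (ℓ : G.Loc) : (G.GLr S r).price (Sum.inl ℓ) = G.price ℓ := rfl

lemma GLr_fcost_inl (ℓ : G.Loc) (ν : ℝ) : (G.GLr S r).fcost (Sum.inl ℓ) ν = G.fcost ℓ ν := rfl

lemma GLr_fcost_inr (ℓ : G.Loc) (ν : ℝ) :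
    (G.GLr S r).fcost (Sum.inr ℓ) ν = (r - ν) * (G.price ℓ : ℝ) + (G.val (ℓ, r)).toReal := rfl

lemma GLr_M : (G.GLr S r).M = G.M := rfl

lemma GLr_trans_spec (hwf : G.WF) (hsptg : G.IsSPTG 1) (hr0 : 0 ≤ r) (hr1 : r ≤ 1) :
    ∀ δ ∈ (G.GLr S r).trans, ∃ ℓ0 : G.Loc,
      δ.src = Sum.inl ℓ0 ∧ G.owner ℓ0 ≠ Owner.final ∧
      δ.lo = 0 ∧ δ.hi = r ∧ δ.loOpen = false ∧ δ.hiOpen = false ∧ δ.reset = false ∧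
      δ.price.natAbs ≤ G.PT := by
  intro δ hδ
  have hδ' : δ ∈ (G.trans.image fun δ =>
      ({ src := Sum.inl δ.src, lo := max δ.lo 0, hi := min δ.hi r,
         loOpen := δ.loOpen, hiOpen := δ.hiOpen, reset := δ.reset,
         price := δ.price, tgt := Sum.inl δ.tgt } : PTrans (G.Loc ⊕ G.Loc))) ∪
      ((Finset.univ.filter fun ℓ : G.Loc =>
          G.owner ℓ ≠ Owner.final ∧ G.urgent ℓ = false).image
        fun ℓ => ({ src := Sum.inl ℓ, lo := 0, hi := r, loOpen := false, hiOpen := false,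
                    reset := false, price := 0, tgt := Sum.inr ℓ } : PTrans (G.Loc ⊕ G.Loc))) := hδ
  rcases Finset.mem_union.1 hδ' with h | h
  · obtain ⟨δ0, hδ0, rfl⟩ := Finset.mem_image.1 h
    obtain ⟨hlo0, hhi0, hloo, hhio, hres⟩ := hsptg.2.2 δ0 hδ0
    refine ⟨δ0.src, rfl, hwf.1 δ0 hδ0, ?_, ?_, hloo, hhio, hres, ?_⟩
    · show max δ0.lo 0 = 0
      rw [hlo0]; simp
    · show min δ0.hi r = r
      rw [hhi0]; exact min_eq_right hr1
    · exact Finset.le_sup (f := fun δ => δ.price.natAbs) hδ0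
  · obtain ⟨ℓ0, hℓ0, rfl⟩ := Finset.mem_image.1 h
    have hℓ0' := Finset.mem_filter.1 hℓ0
    exact ⟨ℓ0, rfl, hℓ0'.2.1, rfl, rfl, rfl, rfl, rfl, Nat.zero_le _⟩

lemma GLr_transUniform (hwf : G.WF) (hsptg : G.IsSPTG 1) (hr0 : 0 ≤ r) (hr1 : r ≤ 1) :
    TransUniform (G.GLr S r) r := by
  intro δ hδ
  obtain ⟨ℓ0, hsrc, hnf, hlo, hhi, hloo, hhio, hres, -⟩ :=
    GLr_trans_spec G S r hwf hsptg hr0 hr1 δ hδ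
  refine ⟨hlo, hhi, hloo, hhio, hres, ?_⟩
  rw [hsrc]
  exact hnf

lemma GLr_price_bound (hwf : G.WF) (hsptg : G.IsSPTG 1) (hr0 : 0 ≤ r) (hr1 : r ≤ 1) :
    ∀ δ ∈ (G.GLr S r).trans, |δ.price| ≤ (G.PT : ℤ) := by
  intro δ hδ
  obtain ⟨ℓ0, -, -, -, -, -, -, -, hpt⟩ := GLr_trans_spec G S r hwf hsptg hr0 hr1 δ hδ
  rw [Int.abs_eq_natAbs]
  exact_mod_cast hpt

lemma GLr_nonfinal_card :
    (Finset.univ.filter fun x : (G.GLr S r).Loc => (G.GLr S r).owner x ≠ Owner.final).card ≤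
      (Finset.univ.filter fun ℓ : G.Loc => G.owner ℓ ≠ Owner.final).card := by
  classical
  have hsub : (Finset.univ.filter fun x : (G.GLr S r).Loc =>
      (G.GLr S r).owner x ≠ Owner.final) ⊆
      (Finset.univ.filter fun ℓ : G.Loc => G.owner ℓ ≠ Owner.final).image Sum.inl := by
    intro x hx
    have hx' := (Finset.mem_filter.1 hx).2
    cases x with
    | inl ℓ0 =>
        exact Finset.mem_image.2 ⟨ℓ0, Finset.mem_filter.2 ⟨Finset.mem_univ _, hx'⟩, rfl⟩
    | inr ℓ0 => exact absurd rfl hx'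
  exact le_trans (Finset.card_le_card hsub) Finset.card_image_le

lemma nonfinal_card_le_nLoc :
    (Finset.univ.filter fun ℓ : G.Loc => G.owner ℓ ≠ Owner.final).card ≤ G.nLoc :=
  le_trans (Finset.card_filter_le _ _) (le_of_eq (by rfl))

lemma nonfinal_card_le_sub (f₀ : G.Loc) (hf₀ : G.owner f₀ = Owner.final) :
    (Finset.univ.filter fun ℓ : G.Loc => G.owner ℓ ≠ Owner.final).card ≤ G.nLoc - 1 := by
  classical
  have hsub : (Finset.univ.filter fun ℓ : G.Loc => G.owner ℓ ≠ Owner.final) ⊆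
      Finset.univ.erase f₀ := by
    intro x hx
    have hx' := (Finset.mem_filter.1 hx).2
    refine Finset.mem_erase.2 ⟨?_, Finset.mem_univ _⟩
    intro h
    exact hx' (h ▸ hf₀)
  have := Finset.card_le_card hsub
  rwa [Finset.card_erase_of_mem (Finset.mem_univ _), Finset.card_univ] at this

end GLrFacts

/-- Transfer of simple consistency of a chain from one clock value to another within
an interval avoiding all points of the strategy. -/
lemma scChain_transfer {P : PTG} {r : ℝ} (σ' : FPStrat P r Owner.min) {u v : ℝ}
    (hu0 : 0 < u) (huv : u ≤ v) (hvr : v ≤ r)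
    (hdisj : ∀ p ∈ σ'.points, ¬ (u ≤ p ∧ p ≤ v)) {ν μ : ℝ}
    (hν1 : u ≤ ν) (hν2 : ν ≤ v) (hμ1 : u ≤ μ) (hμ2 : μ ≤ v) :
    ∀ (δs : List (PTrans P.Loc)) (ℓ : P.Loc),
      SCChain P σ'.strat ν ℓ δs → SCChain P σ'.strat μ ℓ δs := by
  intro δs
  induction δs with
  | nil => intro ℓ _; trivial
  | cons δ t ih =>
      rintro ℓ ⟨hhead, htail⟩
      refine ⟨?_, ih δ.tgt htail⟩
      intro hown
      have hh := hhead hown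
      rcases strat_on_interval σ' hu0 huv hvr hdisj ℓ hown with ⟨δ', hδ'⟩ | ⟨p, δ', hp, hδ'⟩
      · rw [hδ' ν hν1 hν2] at hh
        rw [hδ' μ hμ1 hμ2, ← hh]
      · rw [hδ' ν hν1 hν2] at hh
        have h0 : (0 : ℝ) = p - ν := congrArg Prod.fst hh
        have : p ≤ v := by linarith
        linarith [lt_of_le_of_lt hν2 hp]

end Lemma10Aux




/-- Lemma 10: let `ℓ_min` be a non-urgent location of minimal price of
an SPTG `G`, and `r ∈ (0,1]` with `G_{ℓ_min,r}` finitely optimal. If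
`Val_{G_{ℓ_min,r}}(ℓ_min)` is affine on a non-singleton interval `I ⊆ [0,r]` with slope
strictly greater than `−π(ℓ_min)`, then it coincides on `I` with some function of `F_G`. -/
theorem affine_piece_from_FF (G : PTG) (hwf : G.WF) (hsptg : G.IsSPTG 1)
    (hfin : ∀ (ℓ : G.Loc) (ν : ℝ), 0 ≤ ν → ν ≤ 1 → ∃ x : ℝ, G.val (ℓ, ν) = (x : EReal))
    (ℓmin : G.Loc) (hℓu : G.urgent ℓmin = false) (hℓf : G.owner ℓmin ≠ Owner.final)
    (hmin : ∀ ℓ : G.Loc, G.price ℓmin ≤ G.price ℓ)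
    (r : ℝ) (hr0 : 0 < r) (hr1 : r ≤ 1)
    (hfo : (G.GLr (singLoc G ℓmin) r).FinitelyOptimal r)
    (I : Set ℝ) (hI : I ⊆ Set.Icc 0 r) (hns : ∃ u ∈ I, ∃ v ∈ I, u ≠ v)
    (hIint : ∀ u ∈ I, ∀ v ∈ I, Set.Icc u v ⊆ I)
    (α β : ℝ) (hα : -(G.price ℓmin : ℝ) < α)
    (haff : ∀ ν ∈ I, (G.GLr (singLoc G ℓmin) r).val (Sum.inl ℓmin, ν) =
      ((α * ν + β : ℝ) : EReal)) :
    ∃ f ∈ G.FF, ∀ ν ∈ I,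
      (G.GLr (singLoc G ℓmin) r).val (Sum.inl ℓmin, ν) = ((f ν : ℝ) : EReal) := by
  classical
  obtain ⟨⟨σ', hNCσ, hFake⟩, -, -⟩ := hfo
  have hr0' : (0 : ℝ) ≤ r := le_of_lt hr0
  have htu : TransUniform (G.GLr (singLoc G ℓmin) r) r := GLr_transUniform G (singLoc G ℓmin) r hwf hsptg hr0' hr1
  have hPT : ∀ δ ∈ (G.GLr (singLoc G ℓmin) r).trans, |δ.price| ≤ (G.PT : ℤ) :=
    GLr_price_bound G (singLoc G ℓmin) r hwf hsptg hr0' hr1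
  have hM1 : (1 : ℝ) ≤ (G.M : ℝ) := by
    obtain ⟨s', t, δ, c, hmv⟩ :=
      hwf.2.2.2.2 ℓmin 0 hℓf (le_refl 0) (Nat.cast_nonneg _)
    have h1 : δ.hi = 1 := (hsptg.2.2 δ hmv.1).2.1
    have h2 := (hwf.2.1 δ hmv.1).2
    rwa [h1] at h2
  have hrM : r ≤ ((G.GLr (singLoc G ℓmin) r).M : ℝ) := by rw [GLr_M]; exact le_trans hr1 hM1
  have hmem := σ'.memoryless
  -- choice of the working interval [u, v]
  obtain ⟨u₀, hu₀I, v₀, hv₀I, hne0⟩ := hns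
  set w₁ := min u₀ v₀ with hw₁def
  set w₂ := max u₀ v₀ with hw₂def
  have hw12 : w₁ < w₂ := min_lt_max.2 hne0
  have hw₁I : w₁ ∈ I := by
    rcases min_choice u₀ v₀ with h | h <;> rw [hw₁def, h]
    exacts [hu₀I, hv₀I]
  have hw₂I : w₂ ∈ I := by
    rcases max_choice u₀ v₀ with h | h <;> rw [hw₂def, h]
    exacts [hu₀I, hv₀I]
  have hw₁0 : 0 ≤ w₁ := (hI hw₁I).1
  have hw₂r : w₂ ≤ r := (hI hw₂I).2
  set u₁ := (w₁ + w₂) / 2 with hu₁def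
  have hu₁pos : 0 < u₁ := by rw [hu₁def]; linarith
  have hu₁w : w₁ < u₁ ∧ u₁ < w₂ := by constructor <;> (rw [hu₁def]; linarith)
  have hPne : ((insert u₁ σ'.points).filter fun p => p < w₂).Nonempty :=
    ⟨u₁, Finset.mem_filter.2 ⟨Finset.mem_insert_self _ _, hu₁w.2⟩⟩
  set a := (((insert u₁ σ'.points).filter fun p => p < w₂)).max' hPne with hadef
  have haw : a < w₂ := (Finset.mem_filter.1 (Finset.max'_mem _ hPne)).2
  have hau : u₁ ≤ a :=
    Finset.le_max' ((insert u₁ σ'.points).filter fun p => p < w₂) u₁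
      (Finset.mem_filter.2 ⟨Finset.mem_insert_self _ _, hu₁w.2⟩)
  set u := a + (w₂ - a) / 3 with hudef
  set v := a + 2 * (w₂ - a) / 3 with hvdef
  have hu0 : 0 < u := by rw [hudef]; linarith
  have huv : u < v := by rw [hudef, hvdef]; linarith
  have hvw : v < w₂ := by rw [hvdef]; linarith
  have hw1u : w₁ < u := by rw [hudef]; linarith
  have hvr : v ≤ r := by linarith
  have hau' : a < u := by rw [hudef]; linarith
  have hdisj : ∀ p ∈ σ'.points, ¬ (u ≤ p ∧ p ≤ v) := by
    rintro p hp ⟨h1, h2⟩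
    have hpw : p < w₂ := by linarith
    have hpa : p ≤ a :=
      Finset.le_max' ((insert u₁ σ'.points).filter fun p => p < w₂) p
        (Finset.mem_filter.2 ⟨Finset.mem_insert_of_mem hp, hpw⟩)
    linarith
  have hIcc : ∀ x : ℝ, u ≤ x → x ≤ v → x ∈ I := fun x h1 h2 =>
    hIint w₁ hw₁I w₂ hw₂I ⟨by linarith, by linarith⟩
  have huI : u ∈ I := hIcc u le_rfl (le_of_lt huv)
  have hu0' : (0:ℝ) ≤ u := (hI huI).1
  have hur : u ≤ r := (hI huI).2
  -- the fake value on I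
  have hVr : ∀ ν ∈ I, (G.GLr (singLoc G ℓmin) r).fakeVal σ'.strat (Sum.inl ℓmin, ν) =
      ((α * ν + β : ℝ) : EReal) := by
    intro ν hν
    rw [hFake (Sum.inl ℓmin) ν (hI hν).1 (hI hν).2]
    exact haff ν hν
  -- the NC property in chain form
  have HNCchain : ∀ ν : ℝ, 0 ≤ ν → ν ≤ r → ∀ (ℓ : (G.GLr (singLoc G ℓmin) r).Loc)
      (δs : List (PTrans (G.GLr (singLoc G ℓmin) r).Loc)),
      ChainOK (G.GLr (singLoc G ℓmin) r) ℓ δs → SCChain (G.GLr (singLoc G ℓmin) r) σ'.strat ν ℓ δs → δs ≠ [] →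
      chainEnd (G.GLr (singLoc G ℓmin) r) ℓ δs = ℓ → sumP δs ≤ -1 := by
    intro ν h0 hr' ℓ δs hc hsc hnil hend
    have hv : (G.GLr (singLoc G ℓmin) r).HistValid ⟨(ℓ, ν), mkSteps _ ν δs⟩ :=
      ⟨h0, le_trans hr' hrM, validFrom_mkSteps htu h0 hr' δs ℓ hc⟩
    have hcons := (consistent_iff_scFrom htu hrM hmem _ _ hv).2
      ((scChain_iff_scFrom σ'.strat ν δs ℓ).2 hsc)
    have hlast : (⟨(ℓ, ν), mkSteps _ ν δs⟩ : Hist (G.GLr (singLoc G ℓmin) r).Loc).last.1 = ℓ := by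
      show (Hist.lastFrom (ℓ, ν) (mkSteps _ ν δs)).1 = ℓ
      rw [lastFrom_mkSteps]
      exact hend
    have hlast2 : (⟨(ℓ, ν), mkSteps _ ν δs⟩ : Hist (G.GLr (singLoc G ℓmin) r).Loc).last.2
        = ν := by
      show (Hist.lastFrom (ℓ, ν) (mkSteps _ ν δs)).2 = ν
      rw [lastFrom_mkSteps]
    have hsame : SameInterval σ'.points
        ((⟨(ℓ, ν), mkSteps _ ν δs⟩ : Hist (G.GLr (singLoc G ℓmin) r).Loc)).start.2
        ((⟨(ℓ, ν), mkSteps _ ν δs⟩ : Hist (G.GLr (singLoc G ℓmin) r).Loc)).last.2 := by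
      intro p hp
      rw [hlast2]
    have hres := hNCσ ⟨(ℓ, ν), mkSteps _ ν δs⟩ hv hcons
      (by simpa [mkSteps] using hnil) hlast hsame
    rwa [discSum_mkSteps] at hres
  -- upper bound for consistent final plays
  have hplay_le : ∀ ν ∈ I, ∀ steps : Steps (G.GLr (singLoc G ℓmin) r),
      (G.GLr (singLoc G ℓmin) r).HistValid ⟨(Sum.inl ℓmin, ν), steps⟩ →
      SCFrom (G.GLr (singLoc G ℓmin) r) σ'.strat (Sum.inl ℓmin, ν) steps →
      (G.GLr (singLoc G ℓmin) r).owner (Hist.lastFrom (Sum.inl ℓmin, ν) steps).1 = Owner.final →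
      ((Hist.costFrom (G.GLr (singLoc G ℓmin) r).price (Sum.inl ℓmin, ν) steps +
        (G.GLr (singLoc G ℓmin) r).fcost (Hist.lastFrom (Sum.inl ℓmin, ν) steps).1
          (Hist.lastFrom (Sum.inl ℓmin, ν) steps).2 : ℝ) : EReal) ≤
      ((α * ν + β : ℝ) : EReal) := by
    intro ν hν steps hv hsc hfin
    have hcons := (consistent_iff_scFrom htu hrM hmem steps _ hv).2 hsc
    have h1 : ((Hist.costFrom (G.GLr (singLoc G ℓmin) r).price (Sum.inl ℓmin, ν) steps +
        (G.GLr (singLoc G ℓmin) r).fcost (Hist.lastFrom (Sum.inl ℓmin, ν) steps).1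
          (Hist.lastFrom (Sum.inl ℓmin, ν) steps).2 : ℝ) : EReal) ≤
        (G.GLr (singLoc G ℓmin) r).fakeVal σ'.strat (Sum.inl ℓmin, ν) :=
      le_sSup ⟨⟨(Sum.inl ℓmin, ν), steps⟩, rfl, hv, hcons, hfin, rfl⟩
    exact le_trans h1 (le_of_eq (hVr ν hν))
  -- realized values are at most the fake value
  have hreal_le : ∀ ν ∈ I, ∀ (D : ℤ) (f : (G.GLr (singLoc G ℓmin) r).Loc)
      (δs : List (PTrans (G.GLr (singLoc G ℓmin) r).Loc)),
      ChainOK (G.GLr (singLoc G ℓmin) r) (Sum.inl ℓmin) δs →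
      SCChain (G.GLr (singLoc G ℓmin) r) σ'.strat ν (Sum.inl ℓmin) δs →
      chainEnd (G.GLr (singLoc G ℓmin) r) (Sum.inl ℓmin) δs = f →
      (G.GLr (singLoc G ℓmin) r).owner f = Owner.final → sumP δs = D →
      (D : ℝ) + (G.GLr (singLoc G ℓmin) r).fcost f ν ≤ α * ν + β := by
    intro ν hν D f δs hc hsc hend hfin hD
    have hν0 : (0:ℝ) ≤ ν := (hI hν).1
    have hνr : ν ≤ r := (hI hν).2
    have hv : (G.GLr (singLoc G ℓmin) r).HistValid ⟨(Sum.inl ℓmin, ν), mkSteps _ ν δs⟩ :=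
      ⟨hν0, le_trans hνr hrM, validFrom_mkSteps htu hν0 hνr δs _ hc⟩
    have hsf := (scChain_iff_scFrom σ'.strat ν δs (Sum.inl ℓmin)).2 hsc
    have hlast := lastFrom_mkSteps (G.GLr (singLoc G ℓmin) r) ν (Sum.inl ℓmin) δs
    rw [hend] at hlast
    have hle := hplay_le ν hν _ hv hsf (by erw [hlast]; exact hfin)
    erw [costFrom_mkSteps, hlast, hD] at hle
    exact EReal.coe_le_coe_iff.1 hle
  -- the finite candidate set
  set B : ℤ := (G.nLoc : ℤ) * (G.PT : ℤ) with hBdef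
  set AF : Finset (ℤ × (G.GLr (singLoc G ℓmin) r).Loc) := Finset.Icc (-B) B ×ˢ Finset.univ with hAFdef
  have hDB : ∀ δs : List (PTrans (G.GLr (singLoc G ℓmin) r).Loc),
      ChainOK (G.GLr (singLoc G ℓmin) r) (Sum.inl ℓmin) δs →
      (visited (G.GLr (singLoc G ℓmin) r) (Sum.inl ℓmin) δs).Nodup →
      |sumP δs| ≤ (δs.length : ℤ) * (G.PT : ℤ) ∧
      δs.length ≤ (Finset.univ.filter fun ℓ : G.Loc => G.owner ℓ ≠ Owner.final).card := by
    intro δs hc hnd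
    constructor
    · exact abs_sumP_le _ δs fun δ hδ => hPT δ (chain_mem_trans δs _ hc δ hδ)
    · exact le_trans (chain_length_le htu hc hnd) (GLr_nonfinal_card G (singLoc G ℓmin) r)
  have hPT0 : (0:ℤ) ≤ (G.PT : ℤ) := Int.ofNat_nonneg _
  have hAFmem : ∀ (D : ℤ) (f : (G.GLr (singLoc G ℓmin) r).Loc)
      (δs : List (PTrans (G.GLr (singLoc G ℓmin) r).Loc)),
      ChainOK (G.GLr (singLoc G ℓmin) r) (Sum.inl ℓmin) δs →
      (visited (G.GLr (singLoc G ℓmin) r) (Sum.inl ℓmin) δs).Nodup → sumP δs = D → (D, f) ∈ AF := by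
    intro D f δs hc hnd hD
    obtain ⟨h1, h2⟩ := hDB δs hc hnd
    have h3 : (δs.length : ℤ) * (G.PT : ℤ) ≤ B := by
      rw [hBdef]
      refine mul_le_mul_of_nonneg_right ?_ hPT0
      exact_mod_cast le_trans h2 (nonfinal_card_le_nLoc G)
    have h4 : |D| ≤ B := hD ▸ le_trans h1 h3
    rw [hAFdef]
    refine Finset.mem_product.2 ⟨Finset.mem_Icc.2 ⟨?_, ?_⟩, Finset.mem_univ _⟩
    · linarith [(abs_le.1 h4).1]
    · linarith [(abs_le.1 h4).2]
  -- main pointwise lemma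
  have hmain : ∀ ν : ℝ, u < ν → ν ≤ v →
      ∃ p : ℤ × (G.GLr (singLoc G ℓmin) r).Loc, p ∈ AF ∧
      ∃ δs : List (PTrans (G.GLr (singLoc G ℓmin) r).Loc),
        ChainOK (G.GLr (singLoc G ℓmin) r) (Sum.inl ℓmin) δs ∧
        SCChain (G.GLr (singLoc G ℓmin) r) σ'.strat ν (Sum.inl ℓmin) δs ∧
        (visited (G.GLr (singLoc G ℓmin) r) (Sum.inl ℓmin) δs).Nodup ∧
        chainEnd (G.GLr (singLoc G ℓmin) r) (Sum.inl ℓmin) δs = p.2 ∧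
        (G.GLr (singLoc G ℓmin) r).owner p.2 = Owner.final ∧ sumP δs = p.1 ∧
        (p.1 : ℝ) + (G.GLr (singLoc G ℓmin) r).fcost p.2 ν = α * ν + β := by
    intro ν huν hνv
    have hν1 : u ≤ ν := le_of_lt huν
    have hνI : ν ∈ I := hIcc ν hν1 hνv
    have hν0 : (0:ℝ) ≤ ν := (hI hνI).1
    have hνr : ν ≤ r := (hI hνI).2
    set W : ℝ := α * u + β - (ν - u) * (G.price ℓmin : ℝ) with hWdef
    have hWlt : W < α * ν + β := by
      have h1 : 0 < (ν - u) * (α + (G.price ℓmin : ℝ)) :=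
        mul_pos (by linarith) (by linarith)
      have h2 : α * ν + β - W = (ν - u) * (α + (G.price ℓmin : ℝ)) := by
        rw [hWdef]; ring
      linarith
    set T : Finset ℝ := insert W ((AF.filter fun p =>
      ∃ δs : List (PTrans (G.GLr (singLoc G ℓmin) r).Loc),
        ChainOK (G.GLr (singLoc G ℓmin) r) (Sum.inl ℓmin) δs ∧
        SCChain (G.GLr (singLoc G ℓmin) r) σ'.strat ν (Sum.inl ℓmin) δs ∧
        (visited (G.GLr (singLoc G ℓmin) r) (Sum.inl ℓmin) δs).Nodup ∧
        chainEnd (G.GLr (singLoc G ℓmin) r) (Sum.inl ℓmin) δs = p.2 ∧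
        (G.GLr (singLoc G ℓmin) r).owner p.2 = Owner.final ∧ sumP δs = p.1).image
        fun p => (p.1 : ℝ) + (G.GLr (singLoc G ℓmin) r).fcost p.2 ν) with hTdef
    have hTne : T.Nonempty := ⟨W, by rw [hTdef]; exact Finset.mem_insert_self _ _⟩
    have hbound : ∀ x ∈ {x : EReal | ∃ h : Hist (G.GLr (singLoc G ℓmin) r).Loc,
        h.start = (Sum.inl ℓmin, ν) ∧ (G.GLr (singLoc G ℓmin) r).HistValid h ∧
        (G.GLr (singLoc G ℓmin) r).Consistent Owner.min σ'.strat h ∧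
        (G.GLr (singLoc G ℓmin) r).owner h.last.1 = Owner.final ∧
        x = (((G.GLr (singLoc G ℓmin) r).accCost h +
          (G.GLr (singLoc G ℓmin) r).fcost h.last.1 h.last.2 : ℝ) : EReal)},
        x ≤ ((T.max' hTne : ℝ) : EReal) := by
      rintro x ⟨h, hstart, hv, hcons, hfin', hxeq⟩
      obtain ⟨s0, steps⟩ := h
      have hs0 : s0 = (Sum.inl ℓmin, ν) := hstart
      subst hs0
      subst hxeq
      have hsf : SCFrom (G.GLr (singLoc G ℓmin) r) σ'.strat (Sum.inl ℓmin, ν) steps :=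
        (consistent_iff_scFrom htu hrM hmem steps _ hv).1 hcons
      rcases split_steps htu steps _ hv.2.2 with ⟨δs, hst⟩ |
        ⟨δs, t₀, δ₀, s₀, suf, hst, ht₀⟩
      · -- zero-delay play
        have hst' : steps = mkSteps (G.GLr (singLoc G ℓmin) r) ν δs := hst
        subst hst'
        have hc := chainOK_of_validFrom δs (Sum.inl ℓmin) hv.2.2
        have hsc := (scChain_iff_scFrom σ'.strat ν δs (Sum.inl ℓmin)).1 hsf
        have hlast := lastFrom_mkSteps (G.GLr (singLoc G ℓmin) r) ν (Sum.inl ℓmin) δs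
        obtain ⟨δs', h1, h2, h3, h4, h5, h6⟩ :=
          reduce_chain (HNCchain ν hν0 hνr) δs.length δs le_rfl (Sum.inl ℓmin) hc hsc
        have hfin2 : (G.GLr (singLoc G ℓmin) r).owner
            (chainEnd (G.GLr (singLoc G ℓmin) r) (Sum.inl ℓmin) δs) = Owner.final := by
          have hfin3 := hfin'
          erw [show (⟨(Sum.inl ℓmin, ν), mkSteps _ ν δs⟩ :
            Hist (G.GLr (singLoc G ℓmin) r).Loc).last =
            (chainEnd (G.GLr (singLoc G ℓmin) r) (Sum.inl ℓmin) δs, ν) from hlast] at hfin3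
          exact hfin3
        have hfin2' : (G.GLr (singLoc G ℓmin) r).owner
            (chainEnd (G.GLr (singLoc G ℓmin) r) (Sum.inl ℓmin) δs') = Owner.final := by
          rw [h3]; exact hfin2
        have hrealmem : ((sumP δs' : ℝ) + (G.GLr (singLoc G ℓmin) r).fcost
            (chainEnd (G.GLr (singLoc G ℓmin) r) (Sum.inl ℓmin) δs) ν) ∈ T := by
          rw [hTdef]
          refine Finset.mem_insert_of_mem (Finset.mem_image.2
            ⟨(sumP δs', chainEnd (G.GLr (singLoc G ℓmin) r) (Sum.inl ℓmin) δs), ?_, rfl⟩)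
          refine Finset.mem_filter.2 ⟨hAFmem (sumP δs') _ δs' h1 h5 rfl,
            δs', h1, h2, h5, h3, hfin2, rfl⟩
        refine EReal.coe_le_coe_iff.2 ?_
        show Hist.costFrom (G.GLr (singLoc G ℓmin) r).price (Sum.inl ℓmin, ν)
            (mkSteps _ ν δs) +
          (G.GLr (singLoc G ℓmin) r).fcost
            (Hist.lastFrom (Sum.inl ℓmin, ν) (mkSteps _ ν δs)).1
            (Hist.lastFrom (Sum.inl ℓmin, ν) (mkSteps _ ν δs)).2 ≤ T.max' hTne
        erw [costFrom_mkSteps, hlast]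
        refine le_trans ?_ (Finset.le_max' T _ hrealmem)
        have h7 : (sumP δs : ℝ) ≤ (sumP δs' : ℝ) := by exact_mod_cast h4
        show (sumP δs : ℝ) + (G.GLr (singLoc G ℓmin) r).fcost
            (chainEnd (G.GLr (singLoc G ℓmin) r) (Sum.inl ℓmin) δs) ν ≤ _
        linarith
      · -- positive-delay play
        have hst' : steps = mkSteps (G.GLr (singLoc G ℓmin) r) ν δs ++
            (t₀, δ₀, s₀) :: suf := hst
        subst hst'
        have hvf : (G.GLr (singLoc G ℓmin) r).ValidFrom (Sum.inl ℓmin, ν)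
            (mkSteps (G.GLr (singLoc G ℓmin) r) ν δs ++ (t₀, δ₀, s₀) :: suf) := hv.2.2
        rw [validFrom_append,
          lastFrom_mkSteps (G.GLr (singLoc G ℓmin) r) ν (Sum.inl ℓmin) δs] at hvf
        obtain ⟨hpre, ⟨c, hmv⟩, hsuf⟩ := hvf
        obtain ⟨hδm, hsrc, ht0le, hurg, hguard, hs₀1, hs₀2, -⟩ := hmv
        have ht₀pos : (0:ℝ) < t₀ := lt_of_le_of_ne ht0le (Ne.symm ht₀)
        obtain ⟨ℓ0, hsrc0, hnf0, -, -, -, -, hres0, -⟩ :=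
          GLr_trans_spec G (singLoc G ℓmin) r hwf hsptg hr0' hr1 δ₀ hδm
        have hsrc' : δ₀.src = chainEnd (G.GLr (singLoc G ℓmin) r) (Sum.inl ℓmin) δs := hsrc
        have hℓ'eq : chainEnd (G.GLr (singLoc G ℓmin) r) (Sum.inl ℓmin) δs = Sum.inl ℓ0 :=
          hsrc'.symm.trans hsrc0
        rw [scFrom_append,
          lastFrom_mkSteps (G.GLr (singLoc G ℓmin) r) ν (Sum.inl ℓmin) δs] at hsf
        obtain ⟨hsfpre, hsfrest⟩ := hsf
        have hscpre := (scChain_iff_scFrom σ'.strat ν δs (Sum.inl ℓmin)).1 hsfpre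
        have hcpre := chainOK_of_validFrom δs (Sum.inl ℓmin) hpre
        have hscpre' : SCChain (G.GLr (singLoc G ℓmin) r) σ'.strat u (Sum.inl ℓmin) δs :=
          scChain_transfer σ' hu0 (le_of_lt huv) hvr hdisj hν1 hνv le_rfl
            (le_of_lt huv) δs _ hscpre
        have hs₀2' : s₀.2 = ν + t₀ := by rw [hs₀2, hres0]; simp
        have hmv' : (G.GLr (singLoc G ℓmin) r).Move
            (chainEnd (G.GLr (singLoc G ℓmin) r) (Sum.inl ℓmin) δs, u) s₀
            (t₀ + (ν - u)) δ₀
            ((δ₀.price : ℝ) + (t₀ + (ν - u)) *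
              ((G.GLr (singLoc G ℓmin) r).price
                (chainEnd (G.GLr (singLoc G ℓmin) r) (Sum.inl ℓmin) δs) : ℝ)) := by
          refine ⟨hδm, hsrc, by linarith, ?_, ?_, hs₀1, ?_, rfl⟩
          · intro habs; exact absurd (hurg habs) ht₀
          · show δ₀.memGuard ((chainEnd (G.GLr (singLoc G ℓmin) r) (Sum.inl ℓmin) δs, u).2 +
              (t₀ + (ν - u)))
            have heq2 : ((chainEnd (G.GLr (singLoc G ℓmin) r) (Sum.inl ℓmin) δs, u) :
                (G.GLr (singLoc G ℓmin) r).Config).2 + (t₀ + (ν - u)) =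
                ((chainEnd (G.GLr (singLoc G ℓmin) r) (Sum.inl ℓmin) δs, ν) :
                (G.GLr (singLoc G ℓmin) r).Config).2 + t₀ := by
              show u + (t₀ + (ν - u)) = ν + t₀
              ring
            rw [heq2]
            exact hguard
          · rw [hs₀2', hres0]
            simp
            ring
        have hv' : (G.GLr (singLoc G ℓmin) r).HistValid ⟨(Sum.inl ℓmin, u),
            mkSteps (G.GLr (singLoc G ℓmin) r) u δs ++ (t₀ + (ν - u), δ₀, s₀) :: suf⟩ := by
          refine ⟨hu0', le_trans hur hrM, ?_⟩
          rw [validFrom_append, lastFrom_mkSteps (G.GLr (singLoc G ℓmin) r) u (Sum.inl ℓmin) δs]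
          exact ⟨validFrom_mkSteps htu hu0' hur δs _ hcpre, ⟨_, hmv'⟩, hsuf⟩
        have hsf' : SCFrom (G.GLr (singLoc G ℓmin) r) σ'.strat (Sum.inl ℓmin, u)
            (mkSteps (G.GLr (singLoc G ℓmin) r) u δs ++ (t₀ + (ν - u), δ₀, s₀) :: suf) := by
          rw [scFrom_append, lastFrom_mkSteps (G.GLr (singLoc G ℓmin) r) u (Sum.inl ℓmin) δs]
          refine ⟨(scChain_iff_scFrom σ'.strat u δs _).2 hscpre', ?_, hsfrest.2⟩
          intro hown
          have horig := hsfrest.1 hown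
          rcases strat_on_interval σ' hu0 (le_of_lt huv) hvr hdisj
            (chainEnd (G.GLr (singLoc G ℓmin) r) (Sum.inl ℓmin) δs) hown
            with ⟨δ', hδ'⟩ | ⟨p, δ', hp, hδ'⟩
          · rw [hδ' ν hν1 hνv] at horig
            have ht00 : t₀ = 0 := congrArg Prod.fst horig
            exact absurd ht00 ht₀
          · rw [hδ' ν hν1 hνv] at horig
            have hpf : t₀ = p - ν := congrArg Prod.fst horig
            have hps : δ₀ = δ' := congrArg Prod.snd horig
            rw [hδ' u le_rfl (le_of_lt huv), ← hps]
            have h3 : t₀ + (ν - u) = p - u := by rw [hpf]; ring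
            rw [h3]
        have hlastu : Hist.lastFrom ((Sum.inl ℓmin : (G.GLr (singLoc G ℓmin) r).Loc), u)
            (mkSteps (G.GLr (singLoc G ℓmin) r) u δs ++ (t₀ + (ν - u), δ₀, s₀) :: suf) =
            Hist.lastFrom s₀ suf := by
          erw [lastFrom_append, lastFrom_mkSteps (G.GLr (singLoc G ℓmin) r) u (Sum.inl ℓmin) δs]
          rfl
        have hlastν : Hist.lastFrom ((Sum.inl ℓmin : (G.GLr (singLoc G ℓmin) r).Loc), ν)
            (mkSteps (G.GLr (singLoc G ℓmin) r) ν δs ++ (t₀, δ₀, s₀) :: suf) =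
            Hist.lastFrom s₀ suf := by
          erw [lastFrom_append, lastFrom_mkSteps (G.GLr (singLoc G ℓmin) r) ν (Sum.inl ℓmin) δs]
          rfl
        have hfinu : (G.GLr (singLoc G ℓmin) r).owner
            (Hist.lastFrom (Sum.inl ℓmin, u)
              (mkSteps (G.GLr (singLoc G ℓmin) r) u δs ++
                (t₀ + (ν - u), δ₀, s₀) :: suf)).1 = Owner.final := by
          rw [hlastu, ← hlastν]
          exact hfin'
        have hxleu := hplay_le u huI _ hv' hsf' hfinu
        have hcostu : Hist.costFrom (G.GLr (singLoc G ℓmin) r).price (Sum.inl ℓmin, u)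
            (mkSteps (G.GLr (singLoc G ℓmin) r) u δs ++ (t₀ + (ν - u), δ₀, s₀) :: suf)
            = Hist.costFrom (G.GLr (singLoc G ℓmin) r).price (Sum.inl ℓmin, ν)
              (mkSteps (G.GLr (singLoc G ℓmin) r) ν δs ++ (t₀, δ₀, s₀) :: suf)
              + (ν - u) * (((G.GLr (singLoc G ℓmin) r).price
                (chainEnd (G.GLr (singLoc G ℓmin) r) (Sum.inl ℓmin) δs)) : ℝ) := by
          rw [costFrom_append, costFrom_append,
            costFrom_mkSteps (G.GLr (singLoc G ℓmin) r) u (Sum.inl ℓmin) δs,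
            costFrom_mkSteps (G.GLr (singLoc G ℓmin) r) ν (Sum.inl ℓmin) δs,
            lastFrom_mkSteps (G.GLr (singLoc G ℓmin) r) u (Sum.inl ℓmin) δs,
            lastFrom_mkSteps (G.GLr (singLoc G ℓmin) r) ν (Sum.inl ℓmin) δs]
          show (sumP δs : ℝ) + (((δ₀.price : ℝ) + (t₀ + (ν - u)) *
              ((G.GLr (singLoc G ℓmin) r).price
                (chainEnd (G.GLr (singLoc G ℓmin) r) (Sum.inl ℓmin) δs) : ℝ)) +
              Hist.costFrom (G.GLr (singLoc G ℓmin) r).price s₀ suf)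
            = (sumP δs : ℝ) + (((δ₀.price : ℝ) + t₀ *
              ((G.GLr (singLoc G ℓmin) r).price
                (chainEnd (G.GLr (singLoc G ℓmin) r) (Sum.inl ℓmin) δs) : ℝ)) +
              Hist.costFrom (G.GLr (singLoc G ℓmin) r).price s₀ suf)
              + (ν - u) * (((G.GLr (singLoc G ℓmin) r).price
                (chainEnd (G.GLr (singLoc G ℓmin) r) (Sum.inl ℓmin) δs)) : ℝ)
          ring
        have hπ : (G.price ℓmin : ℝ) ≤ ((G.GLr (singLoc G ℓmin) r).price
            (chainEnd (G.GLr (singLoc G ℓmin) r) (Sum.inl ℓmin) δs) : ℝ) := by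
          rw [hℓ'eq, GLr_price_inl]
          exact_mod_cast hmin ℓ0
        rw [hcostu, hlastu] at hxleu
        have hxleu' := EReal.coe_le_coe_iff.1 hxleu
        have hWle : W ≤ T.max' hTne :=
          Finset.le_max' T W (by rw [hTdef]; exact Finset.mem_insert_self _ _)
        refine EReal.coe_le_coe_iff.2 ?_
        show Hist.costFrom (G.GLr (singLoc G ℓmin) r).price (Sum.inl ℓmin, ν)
            (mkSteps (G.GLr (singLoc G ℓmin) r) ν δs ++ (t₀, δ₀, s₀) :: suf) +
          (G.GLr (singLoc G ℓmin) r).fcost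
            (Hist.lastFrom (Sum.inl ℓmin, ν)
              (mkSteps (G.GLr (singLoc G ℓmin) r) ν δs ++ (t₀, δ₀, s₀) :: suf)).1
            (Hist.lastFrom (Sum.inl ℓmin, ν)
              (mkSteps (G.GLr (singLoc G ℓmin) r) ν δs ++ (t₀, δ₀, s₀) :: suf)).2
          ≤ T.max' hTne
        rw [hlastν]
        have hmulle : (ν - u) * (G.price ℓmin : ℝ) ≤ (ν - u) *
            ((G.GLr (singLoc G ℓmin) r).price
              (chainEnd (G.GLr (singLoc G ℓmin) r) (Sum.inl ℓmin) δs) : ℝ) :=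
          mul_le_mul_of_nonneg_left hπ (by linarith)
        rw [hWdef] at hWle
        linarith
    have hsup_le : (G.GLr (singLoc G ℓmin) r).fakeVal σ'.strat (Sum.inl ℓmin, ν)
        ≤ ((T.max' hTne : ℝ) : EReal) := sSup_le hbound
    have hmax : α * ν + β ≤ T.max' hTne := by
      have h2 := le_trans (le_of_eq (hVr ν hνI).symm) hsup_le
      exact EReal.coe_le_coe_iff.1 h2
    have hmaxmem := T.max'_mem hTne
    rcases Finset.mem_insert.1 hmaxmem with hmax' | hmax'
    · exfalso
      rw [hmax'] at hmax
      linarith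
    · obtain ⟨p, hpfilter, hval⟩ := Finset.mem_image.1 hmax'
      obtain ⟨hpAF, hex⟩ := Finset.mem_filter.1 hpfilter
      obtain ⟨δs', hc', hsc', hnd', hend', hfin'', hsum'⟩ := hex
      have hle2 : (p.1 : ℝ) + (G.GLr (singLoc G ℓmin) r).fcost p.2 ν ≤ α * ν + β :=
        hreal_le ν hνI p.1 p.2 δs' hc' hsc' hend' hfin'' hsum'
      have heqv : (p.1 : ℝ) + (G.GLr (singLoc G ℓmin) r).fcost p.2 ν = α * ν + β := by
        refine le_antisymm hle2 ?_
        rw [show (p.1 : ℝ) + (G.GLr (singLoc G ℓmin) r).fcost p.2 ν = T.max' hTne from hval]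
        exact hmax
      exact ⟨p, hpAF, δs', hc', hsc', hnd', hend', hfin'', hsum', heqv⟩
  -- pigeonhole over the finite candidate set
  have hioInf : (Set.Ioc u v).Infinite := Set.Ioc_infinite huv
  set Φ : ℝ → ℤ × (G.GLr (singLoc G ℓmin) r).Loc := fun ν =>
    if h : u < ν ∧ ν ≤ v then (hmain ν h.1 h.2).choose else (0, Sum.inl ℓmin) with hΦdef
  have hΦspec : ∀ ν : ℝ, ∀ h : u < ν ∧ ν ≤ v, Φ ν ∈ AF ∧
      ∃ δs : List (PTrans (G.GLr (singLoc G ℓmin) r).Loc),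
        ChainOK (G.GLr (singLoc G ℓmin) r) (Sum.inl ℓmin) δs ∧
        SCChain (G.GLr (singLoc G ℓmin) r) σ'.strat ν (Sum.inl ℓmin) δs ∧
        (visited (G.GLr (singLoc G ℓmin) r) (Sum.inl ℓmin) δs).Nodup ∧
        chainEnd (G.GLr (singLoc G ℓmin) r) (Sum.inl ℓmin) δs = (Φ ν).2 ∧
        (G.GLr (singLoc G ℓmin) r).owner (Φ ν).2 = Owner.final ∧ sumP δs = (Φ ν).1 ∧
        ((Φ ν).1 : ℝ) + (G.GLr (singLoc G ℓmin) r).fcost (Φ ν).2 ν = α * ν + β := by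
    intro ν h
    have : Φ ν = (hmain ν h.1 h.2).choose := by rw [hΦdef]; simp only [dif_pos h]
    rw [this]
    exact (hmain ν h.1 h.2).choose_spec
  have hmapsto : Set.MapsTo Φ (Set.Ioc u v) (↑AF : Set (ℤ × (G.GLr (singLoc G ℓmin) r).Loc)) := by
    intro ν hν
    exact Finset.mem_coe.2 (hΦspec ν ⟨hν.1, hν.2⟩).1
  obtain ⟨ν₁, hν₁, ν₂, hν₂, hne12, hΦeq⟩ :=
    hioInf.exists_ne_map_eq_of_mapsTo hmapsto AF.finite_toSet
  obtain ⟨-, δs₁, hc₁, hsc₁, hnd₁, hend₁, hfin₁, hsum₁, hval₁⟩ := hΦspec ν₁ ⟨hν₁.1, hν₁.2⟩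
  have hval₂ : ((Φ ν₁).1 : ℝ) + (G.GLr (singLoc G ℓmin) r).fcost (Φ ν₁).2 ν₂ = α * ν₂ + β := by
    obtain ⟨-, δs₂, -, -, -, -, -, -, hval₂⟩ := hΦspec ν₂ ⟨hν₂.1, hν₂.2⟩
    rwa [← hΦeq] at hval₂
  set D : ℤ := (Φ ν₁).1 with hDdef
  have hsub12 : ν₁ - ν₂ ≠ 0 := sub_ne_zero.2 hne12
  rcases hfeq : (Φ ν₁).2 with f₀ | ℓ₀
  · -- final location of `G`: the desired conclusion
    rw [hfeq] at hval₁ hval₂ hfin₁ hend₁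
    have hfinG : G.owner f₀ = Owner.final := hfin₁
    obtain ⟨aa, bb, hab⟩ := hwf.2.2.2.1 f₀ hfinG
    rw [GLr_fcost_inl, hab] at hval₁ hval₂
    have hkey : (α - (aa : ℝ)) * (ν₁ - ν₂) = 0 := by linear_combination hval₂ - hval₁
    have hαa : α = (aa : ℝ) := by
      rcases mul_eq_zero.1 hkey with h | h
      · linarith [sub_eq_zero.1 h]
      · exact absurd h hsub12
    have hβb : β = (D : ℝ) + (bb : ℝ) := by
      have := hval₁
      rw [← hαa] at this
      linarith
    -- bounds on D
    have hnl1 : 1 ≤ G.nLoc := by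
      have : Nonempty G.Loc := ⟨ℓmin⟩
      exact Fintype.card_pos
    have hlen : δs₁.length ≤ G.nLoc - 1 :=
      le_trans (chain_length_le htu hc₁ hnd₁)
        (le_trans (GLr_nonfinal_card G (singLoc G ℓmin) r) (nonfinal_card_le_sub G f₀ hfinG))
    have habs : |D| ≤ ((G.nLoc : ℤ) - 1) * (G.PT : ℤ) := by
      have h1 : |sumP δs₁| ≤ (δs₁.length : ℤ) * (G.PT : ℤ) :=
        abs_sumP_le _ δs₁ fun δ hδ => hPT δ (chain_mem_trans δs₁ _ hc₁ δ hδ)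
      have h2 : (δs₁.length : ℤ) ≤ (G.nLoc : ℤ) - 1 := by
        have := hlen
        omega
      rw [← hsum₁]
      exact le_trans h1 (mul_le_mul_of_nonneg_right h2 hPT0)
    refine ⟨fun ν => (D : ℝ) + G.fcost f₀ ν, ⟨f₀, D, hfinG, ?_, ?_, rfl⟩, ?_⟩
    · exact (abs_le.1 habs).1
    · refine le_trans (abs_le.1 habs).2 ?_
      exact mul_le_mul_of_nonneg_right (by linarith) hPT0
    · intro ν hν
      rw [haff ν hν]
      congr 1
      show α * ν + β = (D : ℝ) + G.fcost f₀ ν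
      rw [hab ν, hαa, hβb]
      ring
  · -- clone location: contradiction with the slope hypothesis
    exfalso
    rw [hfeq] at hval₁ hval₂
    rw [GLr_fcost_inr] at hval₁ hval₂
    have hkey : (α + (G.price ℓ₀ : ℝ)) * (ν₁ - ν₂) = 0 := by
      linear_combination hval₂ - hval₁
    have hαp : α = -(G.price ℓ₀ : ℝ) := by
      rcases mul_eq_zero.1 hkey with h | h
      · linarith
      · exact absurd h hsub12
    have hm := hmin ℓ₀
    have hm' : (G.price ℓmin : ℝ) ≤ (G.price ℓ₀ : ℝ) := by exact_mod_cast hm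
    linarith

end PTGPaper
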